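/- arXiv:1504.02530 — 6 statements merged into one kernel-verified Lean document; each statement's English description precedes it below -/
import Mathlib

section
/- Let T = (V,E) be a finite tree, let σ_vv ≠ 0 be a given real number for each vertex v ∈ V, and let σ_uv = σ_vu be a given real number for each edge {u,v} ∈ E. Define the symmetric matrix Σ indexed by V by Σ_vv = σ_vv, and for u ≠ v with unique path u = w_0, w_1, …, w_k = v in T, Σ_uv = (∏_{i=0}^{k−1} σ_{w_i w_{i+1}}) / (∏_{i=1}^{k−1} σ_{w_i w_i}). Then det Σ = (∏_{{u,v}∈E} (σ_uu·σ_vv − σ_uv²)) / (∏_{v∈V} σ_vv^{d_v − 1}), where d_v is the degree of v in T. -/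
open SimpleGraph

private theorem leaf_exists {V : Type*} [Fintype V] [DecidableEq V] (G : SimpleGraph V)
    [DecidableRel G.Adj] (hT : G.IsTree) (h2 : 2 ≤ Fintype.card V) : ∃ v, G.degree v = 1 := by
  by_contra h
  push_neg at h
  have hdeg : ∀ v : V, 2 ≤ G.degree v := by
    intro v
    have h1 : 0 < G.degree v := by
      rw [G.degree_pos_iff_exists_adj]
      obtain ⟨u, hu⟩ := Fintype.exists_ne_of_one_lt_card h2 v
      obtain ⟨p⟩ := hT.isConnected.preconnected v u
      cases p with
      | nil => exact absurd rfl hu.symm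
      | cons h q => exact ⟨_, h⟩
    have := h v
    omega
  have h3 := G.sum_degrees_eq_twice_card_edges
  have hcard := hT.card_edgeFinset
  have h4 : 2 * Fintype.card V ≤ ∑ v : V, G.degree v := by
    calc 2 * Fintype.card V = ∑ _v : V, 2 := by simp [mul_comm]
    _ ≤ _ := Finset.sum_le_sum fun i _ => hdeg i
  rw [h3] at h4
  omega

private theorem not_mem_support' {V : Type*} [DecidableEq V] (G : SimpleGraph V) {ℓ u : V}
    (hn : ∀ x, G.Adj ℓ x → x = u) {a b : V} (ha : a ≠ ℓ) (hb : b ≠ ℓ)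
    (p : G.Walk a b) (hp : p.IsPath) : ℓ ∉ p.support := by
  intro hmem
  have hspec := p.take_spec hmem
  have hnd : (p.support).Nodup := hp.support_nodup
  rw [← hspec, Walk.support_append, List.nodup_append] at hnd
  obtain ⟨-, -, hdisj⟩ := hnd
  have h1 : u ∈ (p.takeUntil ℓ hmem).support := by
    obtain ⟨x, h, r, hq⟩ := (Walk.not_nil_iff (p := (p.takeUntil ℓ hmem).reverse)).mp
      (Walk.not_nil_of_ne (Ne.symm ha))
    have hu := hn _ h
    have : u ∈ (p.takeUntil ℓ hmem).reverse.support := by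
      rw [hq]; subst hu; simp [Walk.support_cons]
    rwa [Walk.support_reverse, List.mem_reverse] at this
  have h2 : u ∈ (p.dropUntil ℓ hmem).support.tail := by
    obtain ⟨x, h, r, hq⟩ := (Walk.not_nil_iff (p := p.dropUntil ℓ hmem)).mp
      (Walk.not_nil_of_ne (Ne.symm hb))
    have hu := hn _ h
    rw [hq]; subst hu; simp [Walk.support_cons]
  exact hdisj u h1 u h2 rfl

private theorem lift_reachable {V : Type*} (G : SimpleGraph V) (ℓ : V) :
    ∀ {a b : V} (p : G.Walk a b) (ha : a ≠ ℓ) (hb : b ≠ ℓ), ℓ ∉ p.support →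
      (G.comap (Subtype.val : {v : V // v ≠ ℓ} → V)).Reachable ⟨a, ha⟩ ⟨b, hb⟩ := by
  intro a b p
  induction p with
  | nil => intro ha hb _; exact Reachable.refl _
  | @cons a x b h q ih =>
      intro ha hb hmem
      rw [Walk.support_cons] at hmem
      have hx : x ≠ ℓ := fun hxl => hmem (List.mem_cons.mpr (Or.inr (hxl ▸ q.start_mem_support)))
      have hadj : (G.comap (Subtype.val : {v : V // v ≠ ℓ} → V)).Adj ⟨a, ha⟩ ⟨x, hx⟩ := h
      exact hadj.reachable.trans (ih hx hb (fun hl => hmem (List.mem_cons.mpr (Or.inr hl))))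

universe u

private theorem tree_det_aux : ∀ (n : ℕ) {V : Type u} [Fintype V] [DecidableEq V]
    (G : SimpleGraph V) [DecidableRel G.Adj], Fintype.card V = n → G.IsTree →
    ∀ (σD : V → ℝ), (∀ v, σD v ≠ 0) → ∀ (w : Sym2 V → ℝ) (Sig : Matrix V V ℝ),
    (∀ v, Sig v v = σD v) →
    (∀ u v : V, u ≠ v → ∀ p : G.Walk u v, p.IsPath →
      Sig u v = (p.edges.map w).prod / ((p.support.tail.dropLast).map σD).prod) →
    Sig.det =
      (∏ e ∈ G.edgeFinset,
          (Sym2.lift ⟨fun a b => σD a * σD b, fun a b => mul_comm _ _⟩ e - (w e) ^ 2)) /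
        ∏ v : V, σD v ^ ((G.degree v : ℤ) - 1) := by
  intro n
  induction n using Nat.strong_induction_on with
  | _ n IH =>
  intro V _ _ G _ hcard hT σD hσD w Sig hdiag hoff
  -- dispose of small cases
  rcases Nat.lt_or_ge n 2 with hn2 | hn2
  · interval_cases n
    · -- empty: contradiction with connectedness
      haveI : IsEmpty V := Fintype.card_eq_zero_iff.mp hcard
      exact absurd hT.isConnected.nonempty (by rw [← not_isEmpty_iff]; simp [this])
    · -- single vertex
      obtain ⟨v, hv⟩ := Fintype.card_eq_one_iff.mp hcard
      haveI : Unique V := ⟨⟨v⟩, hv⟩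
      have hE : G.edgeFinset = ∅ := by
        apply Finset.card_eq_zero.mp
        have := hT.card_edgeFinset
        omega
      have hdeg : G.degree v = 0 := by
        rw [← card_neighborFinset_eq_degree, Finset.card_eq_zero, Finset.eq_empty_iff_forall_notMem]
        intro x hx
        rw [mem_neighborFinset] at hx
        exact hx.ne (hv x ▸ (hv v).symm)
      have hdv : ∀ x : V, x = v := hv
      rw [Matrix.det_unique]
      have hdef : (default : V) = v := hv _
      rw [hdef, hdiag, hE]
      rw [show (Finset.univ : Finset V) = {v} by ext x; simp [hdef, hv x]]
      simp [hdeg, hσD v]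
  · -- main case: find a leaf
    obtain ⟨ℓ, hℓ⟩ := leaf_exists G hT (hcard ▸ hn2)
    obtain ⟨u, hu⟩ := Finset.card_eq_one.mp ((card_neighborFinset_eq_degree G ℓ).trans hℓ)
    have huadj : G.Adj ℓ u := by
      rw [← mem_neighborFinset, hu]; exact Finset.mem_singleton_self u
    have hℓu : ℓ ≠ u := huadj.ne
    have huℓ : u ≠ ℓ := huadj.ne'
    have hn : ∀ x, G.Adj ℓ x → x = u := by
      intro x hx
      have hx' : x ∈ G.neighborFinset ℓ := (mem_neighborFinset G ℓ x).mpr hx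
      rw [hu, Finset.mem_singleton] at hx'; exact hx'
    have hue : s(ℓ, u) ∈ G.edgeFinset := by rw [mem_edgeFinset]; exact huadj
    have hlprod : ∀ (l : List V), ((l.map σD).prod) ≠ 0 := by
      intro l
      apply List.prod_ne_zero
      intro h0
      rw [List.mem_map] at h0
      obtain ⟨a, -, ha⟩ := h0
      exact hσD a ha
    -- entry lemmas
    have hSigℓu : Sig ℓ u = w s(ℓ, u) := by
      have h1 := hoff ℓ u hℓu (Walk.cons huadj Walk.nil) (by simp [hℓu])
      simpa using h1
    have hSiguℓ : Sig u ℓ = w s(ℓ, u) := by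
      have h1 := hoff u ℓ huℓ (Walk.cons huadj.symm Walk.nil) (by simp [huℓ])
      simpa [Sym2.eq_swap] using h1
    have key : ∀ v : V, v ≠ ℓ → Sig ℓ v = w s(ℓ, u) / σD u * Sig u v := by
      intro v hv
      rcases eq_or_ne v u with rfl | hvu
      · rw [hdiag, hSigℓu, div_mul_cancel₀ _ (hσD _)]
      · obtain ⟨q, hq, -⟩ := hT.existsUnique_path u v
        have hℓq : ℓ ∉ q.support := not_mem_support' G hn huℓ hv q hq
        have hp : (Walk.cons huadj q).IsPath := hq.cons hℓq
        have h1 := hoff ℓ v (Ne.symm hv) (Walk.cons huadj q) hp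
        have h2 := hoff u v (Ne.symm hvu) q hq
        cases q with
        | nil => exact absurd rfl hvu
        | @cons _ x _ h' r =>
          rw [Walk.edges_cons, Walk.support_cons, List.map_cons, List.prod_cons,
            List.tail_cons] at h1
          rw [Walk.support_cons] at h1 h2
          rw [List.tail_cons] at h2
          have hrne : r.support ≠ [] := r.support_ne_nil
          rw [show (u :: r.support).dropLast = u :: r.support.dropLast from
            List.dropLast_cons_of_ne_nil hrne, List.map_cons, List.prod_cons] at h1
          rw [h1, h2]
          field_simp
    -- the diagonal pivot
    set c : ℝ := σD ℓ - w s(ℓ, u) ^ 2 / σD u with hc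
    -- row reduce
    set M : Matrix V V ℝ := Sig.updateRow ℓ (Sig ℓ + (-(w s(ℓ, u) / σD u)) • Sig u) with hM
    have hdetM : M.det = Sig.det := Matrix.det_updateRow_add_smul_self Sig hℓu _
    have hMrow : ∀ a : V, a ≠ ℓ → ∀ b : V, M a b = Sig a b := by
      intro a ha b; rw [hM, Matrix.updateRow_ne ha]
    have hM0 : ∀ b : V, b ≠ ℓ → M ℓ b = 0 := by
      intro b hb
      rw [hM, Matrix.updateRow_self]
      simp only [Pi.add_apply, Pi.smul_apply, smul_eq_mul]
      rw [key b hb]; ring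
    have hMd : M ℓ ℓ = c := by
      rw [hM, Matrix.updateRow_self]
      simp only [Pi.add_apply, Pi.smul_apply, smul_eq_mul]
      rw [hdiag, hSiguℓ, hc]; ring
    -- the induced graph
    set G' := G.comap (Subtype.val : {v : V // v ≠ ℓ} → V) with hG'def
    haveI hdec' : DecidableRel G'.Adj := fun a b => (inferInstance : Decidable (G.Adj a b))
    have hcard' : Fintype.card {v : V // v ≠ ℓ} = n - 1 := by
      have h1 : Fintype.card {v : V // v = ℓ} = 1 := Fintype.card_subtype_eq ℓ
      have h2 := Fintype.card_subtype_compl (fun v : V => v = ℓ)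
      rw [h1, hcard] at h2
      exact h2
    have hG'T : G'.IsTree := by
      constructor
      · rw [connected_iff]
        refine ⟨?_, ⟨⟨u, huℓ⟩⟩⟩
        intro x y
        obtain ⟨p, hp, -⟩ := hT.existsUnique_path x.val y.val
        have hr := lift_reachable G ℓ p x.2 y.2 (not_mem_support' G hn x.2 y.2 p hp)
        convert hr <;> simp
      · intro x c' hc'
        have := hc'.map (f := (SimpleGraph.Embedding.comap
          (Function.Embedding.subtype _) G).toHom) Subtype.val_injective
        exact hT.IsAcyclic _ this
    -- induced data
    set σD' : {v : V // v ≠ ℓ} → ℝ := fun v => σD v.val with hσD'def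
    set w' : Sym2 {v : V // v ≠ ℓ} → ℝ := fun e => w (Sym2.map Subtype.val e) with hw'def
    set Sig' : Matrix {v : V // v ≠ ℓ} {v : V // v ≠ ℓ} ℝ :=
      Sig.submatrix Subtype.val Subtype.val with hSig'def
    have hdiag' : ∀ v', Sig' v' v' = σD' v' := fun v' => hdiag v'.val
    have hinj : Function.Injective (Subtype.val : {v : V // v ≠ ℓ} → V) :=
      Subtype.val_injective
    have hoff' : ∀ a b, a ≠ b → ∀ p : G'.Walk a b, p.IsPath →
        Sig' a b = (p.edges.map w').prod / ((p.support.tail.dropLast).map σD').prod := by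
      intro a b hab p hp
      have hmp : ((p.map (SimpleGraph.Embedding.comap
          (Function.Embedding.subtype _) G).toHom)).IsPath :=
        Walk.map_isPath_of_injective hinj hp
      have h1 := hoff a.val b.val (fun h => hab (Subtype.ext h)) _ hmp
      erw [Walk.edges_map, Walk.support_map] at h1
      rw [hSig'def, Matrix.submatrix_apply, h1]
      have hcoe : ⇑((SimpleGraph.Embedding.comap
          (Function.Embedding.subtype fun v => v ≠ ℓ) G).toHom)
          = (Subtype.val : {v : V // v ≠ ℓ} → V) := rfl
      rw [hcoe]
      congr 1
      · rw [List.map_map]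
        rfl
      · rw [← List.map_tail, ← List.map_dropLast, List.map_map]
        rfl
    have hdet' := IH (n-1) (by omega) G' hcard' hG'T σD' (fun v' => hσD v'.val) w' Sig'
      hdiag' hoff'
    -- det Sig = det Sig' * c
    let es : {v : V // v ≠ ℓ} ⊕ Unit ≃ V :=
      { toFun := Sum.elim Subtype.val (fun _ => ℓ)
        invFun := fun v => if h : v = ℓ then Sum.inr () else Sum.inl ⟨v, h⟩
        left_inv := by
          rintro (⟨v, hv⟩ | x)
          · simp [hv]
          · simp
        right_inv := by intro v; by_cases h : v = ℓ <;> simp [h] }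
    have hMsub : M.submatrix es es
        = Matrix.fromBlocks Sig' (fun a _ => Sig a.val ℓ) 0 (fun _ _ => c) := by
      ext i j
      cases i with
      | inl a =>
        cases j with
        | inl b =>
          simp only [Matrix.submatrix_apply, Matrix.fromBlocks_apply₁₁]
          exact hMrow a.val a.2 b.val
        | inr _ =>
          simp only [Matrix.submatrix_apply, Matrix.fromBlocks_apply₁₂]
          exact hMrow a.val a.2 ℓ
      | inr _ =>
        cases j with
        | inl b =>
          simp only [Matrix.submatrix_apply, Matrix.fromBlocks_apply₂₁, Matrix.zero_apply]
          exact hM0 b.val b.2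
        | inr _ =>
          simp only [Matrix.submatrix_apply, Matrix.fromBlocks_apply₂₂]
          exact hMd
    have hdet2 : Sig.det = Sig'.det * c := by
      rw [← hdetM, ← Matrix.det_submatrix_equiv_self es M, hMsub]
      refine (Matrix.det_fromBlocks_zero₂₁ _ _ _).trans ?_
      congr 1
      exact Matrix.det_unique _
    -- edge product transfer
    have hedge : ∀ F : Sym2 V → ℝ, ∏ e ∈ G.edgeFinset, F e
        = F s(ℓ, u) * ∏ e' ∈ G'.edgeFinset, F (Sym2.map Subtype.val e') := by
      intro F
      rw [← Finset.mul_prod_erase _ _ hue]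
      congr 1
      refine (Finset.prod_nbij (Sym2.map Subtype.val) ?_ ?_ ?_ ?_).symm
      · intro e' he'
        induction e' with
        | _ a b =>
          rw [mem_edgeFinset] at he'
          rw [Finset.mem_erase, Sym2.map_pair_eq, mem_edgeFinset]
          refine ⟨?_, he'⟩
          intro heq
          have hℓmem : ℓ ∈ s(ℓ, u) := Sym2.mem_mk_left ℓ u
          rw [← heq] at hℓmem
          rcases Sym2.mem_iff.mp hℓmem with h | h
          · exact a.2 h.symm
          · exact b.2 h.symm
      · intro x _ y _ hxy
        exact Sym2.map.injective hinj hxy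
      · intro e he
        rw [Finset.coe_erase, Set.mem_diff] at he
        obtain ⟨he1, he2⟩ := he
        rw [Finset.mem_coe, mem_edgeFinset] at he1
        induction e with
        | _ x y =>
          have hx : x ≠ ℓ := by
            intro hxl
            subst hxl
            exact he2 (by rw [hn y he1]; rfl)
          have hy : y ≠ ℓ := by
            intro hyl
            subst hyl
            rw [hn x he1.symm] at he2
            exact he2 (Sym2.eq_swap)
          refine ⟨s(⟨x, hx⟩, ⟨y, hy⟩), ?_, ?_⟩
          · rw [Finset.mem_coe, mem_edgeFinset]
            exact he1
          · rw [Sym2.map_pair_eq]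
      · intro e' _
        rfl
    -- degree facts
    have hdegcard : ∀ v' : {v : V // v ≠ ℓ},
        G'.degree v' = ((G.neighborFinset v'.val).erase ℓ).card := by
      intro v'
      rw [← card_neighborFinset_eq_degree]
      refine Finset.card_nbij Subtype.val ?_ ?_ ?_
      · intro x hx
        rw [Finset.mem_coe, mem_neighborFinset] at hx
        rw [Finset.mem_coe, Finset.mem_erase, mem_neighborFinset]
        exact ⟨x.2, hx⟩
      · intro x _ y _ hxy
        exact hinj hxy
      · intro x hx
        rw [Finset.coe_erase, Set.mem_diff, Finset.mem_coe, mem_neighborFinset] at hx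
        obtain ⟨hx1, hx2⟩ := hx
        have hxl : x ≠ ℓ := by simpa using hx2
        refine ⟨⟨x, hxl⟩, ?_, rfl⟩
        rw [Finset.mem_coe, mem_neighborFinset]
        exact hx1
    have hdeg1 : ∀ v' : {v : V // v ≠ ℓ}, v'.val ≠ u → G'.degree v' = G.degree v'.val := by
      intro v' hvu
      rw [hdegcard, Finset.erase_eq_of_notMem, card_neighborFinset_eq_degree]
      rw [mem_neighborFinset]
      intro hadj
      exact hvu (hn _ hadj.symm)
    have hdupos : 1 ≤ G.degree u := by
      rw [Nat.one_le_iff_ne_zero, ← Nat.pos_iff_ne_zero, G.degree_pos_iff_exists_adj]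
      exact ⟨ℓ, huadj.symm⟩
    have hdeg2 : G'.degree ⟨u, huℓ⟩ = G.degree u - 1 := by
      rw [hdegcard, Finset.card_erase_of_mem, card_neighborFinset_eq_degree]
      rw [mem_neighborFinset]
      exact huadj.symm
    -- degree product transfer
    have hA : (∏ v' : {v : V // v ≠ ℓ}, σD v'.val ^ ((G.degree v'.val : ℤ) - 1))
        = σD u * ∏ v' : {v : V // v ≠ ℓ}, σD' v' ^ ((G'.degree v' : ℤ) - 1) := by
      have hR : (∏ v' ∈ Finset.univ.erase (⟨u, huℓ⟩ : {v : V // v ≠ ℓ}),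
            σD v'.val ^ ((G.degree v'.val : ℤ) - 1))
          = ∏ v' ∈ Finset.univ.erase (⟨u, huℓ⟩ : {v : V // v ≠ ℓ}),
            σD' v' ^ ((G'.degree v' : ℤ) - 1) := by
        refine Finset.prod_congr rfl ?_
        intro v' hv'
        have hvu : v'.val ≠ u := fun h => (Finset.mem_erase.mp hv').1 (Subtype.ext h)
        rw [hdeg1 v' hvu]
      rw [← Finset.mul_prod_erase Finset.univ _
          (Finset.mem_univ (⟨u, huℓ⟩ : {v : V // v ≠ ℓ})),
        ← Finset.mul_prod_erase Finset.univ _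
          (Finset.mem_univ (⟨u, huℓ⟩ : {v : V // v ≠ ℓ})), hR, ← mul_assoc]
      congr 1
      have hcast : ((G'.degree (⟨u, huℓ⟩ : {v : V // v ≠ ℓ}) : ℤ) - 1)
          = (G.degree u : ℤ) - 2 := by
        rw [hdeg2]
        push_cast [hdupos]
        omega
      rw [hcast]
      rw [show ((G.degree ((⟨u, huℓ⟩ : {v : V // v ≠ ℓ}) : V) : ℤ) - 1)
          = 1 + ((G.degree u : ℤ) - 2) by push_cast; ring,
        zpow_add₀ (hσD u), zpow_one]
    have hdprod : ∏ v : V, σD v ^ ((G.degree v : ℤ) - 1)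
        = σD u * ∏ v' : {v : V // v ≠ ℓ}, σD' v' ^ ((G'.degree v' : ℤ) - 1) := by
      rw [← Finset.mul_prod_erase Finset.univ _ (Finset.mem_univ ℓ), hℓ]
      simp only [Nat.cast_one, sub_self, zpow_zero, one_mul]
      rw [Finset.prod_subtype (p := fun v : V => v ≠ ℓ) (Finset.univ.erase ℓ)
        (fun v => by simp) (fun v => σD v ^ ((G.degree v : ℤ) - 1))]
      exact hA
    -- final assembly
    rw [hdet2, hdet', hedge (fun e =>
      Sym2.lift ⟨fun a b => σD a * σD b, fun a b => mul_comm _ _⟩ e - (w e) ^ 2), hdprod]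
    have hEE : (∏ e' ∈ G'.edgeFinset,
          (Sym2.lift ⟨fun a b => σD' a * σD' b, fun a b => mul_comm _ _⟩ e' - (w' e') ^ 2))
        = ∏ e' ∈ G'.edgeFinset, ((fun e =>
          Sym2.lift ⟨fun a b => σD a * σD b, fun a b => mul_comm _ _⟩ e - (w e) ^ 2)
            (Sym2.map Subtype.val e')) := by
      refine Finset.prod_congr rfl ?_
      intro e' _
      induction e' with
      | _ a b => simp [Sym2.map_pair_eq, hσD'def, hw'def]
    rw [← hEE]
    have hlift : (Sym2.lift ⟨fun a b => σD a * σD b, fun a b => mul_comm _ _⟩ s(ℓ, u))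
        = σD ℓ * σD u := by simp
    rw [hlift, hc]
    rw [show σD ℓ - w s(ℓ, u) ^ 2 / σD u = (σD ℓ * σD u - w s(ℓ, u) ^ 2) / σD u from by
      rw [eq_div_iff (hσD u), sub_mul, div_mul_cancel₀ _ (hσD u)]]
    rw [div_mul_div_comm]
    ring

/-- Let `T = (V,E)` be a finite tree, `σD v ≠ 0` for each vertex,
and `w e` a weight for each edge. Let `Σ` be the matrix with `Σ v v = σD v` and, for
`u ≠ v` with unique path `u = w₀, …, w_k = v`,
`Σ u v = (∏ edge covariances along the path) / (∏ diagonal entries at interior vertices)`.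
Then `det Σ = (∏_{{u,v}∈E} (σ_uu·σ_vv − σ_uv²)) / (∏_{v∈V} σ_vv^{d_v − 1})`. -/
theorem stmt_3 {V : Type*} [Fintype V] [DecidableEq V] (G : SimpleGraph V)
    [DecidableRel G.Adj] (hT : G.IsTree)
    (σD : V → ℝ) (hσD : ∀ v, σD v ≠ 0) (w : Sym2 V → ℝ)
    (Sig : Matrix V V ℝ)
    (hdiag : ∀ v, Sig v v = σD v)
    (hoff : ∀ u v : V, u ≠ v → ∀ p : G.Walk u v, p.IsPath →
      Sig u v = (p.edges.map w).prod / ((p.support.tail.dropLast).map σD).prod) :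
    Sig.det =
      (∏ e ∈ G.edgeFinset,
          (Sym2.lift ⟨fun a b => σD a * σD b, fun a b => mul_comm _ _⟩ e - (w e) ^ 2)) /
        ∏ v : V, σD v ^ ((G.degree v : ℤ) - 1) := by
  exact tree_det_aux (Fintype.card V) G rfl hT σD hσD w Sig hdiag hoff
end

section
/- Let T = (V,E) be a finite tree and let w_e ∈ (−1,1) be a weight assigned to each edge e ∈ E. Define the symmetric matrix Σ indexed by V by Σ_vv = 1 for every v, and Σ_uv = the product of the weights of the edges on the unique path from u to v, for u ≠ v. Then det Σ = ∏_{e∈E} (1 − w_e²). In particular, 0 < det Σ ≤ 1, with det Σ < 1 whenever some edge weight is nonzero. -/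
open SimpleGraph

universe u

section Aux

variable {V : Type u}

/-- A walk whose support stays in `s` yields reachability in the induced graph. -/
lemma aux_reachable_induce {G : SimpleGraph V} {s : Set V} :
    ∀ {u v : V} (p : G.Walk u v), (∀ y ∈ p.support, y ∈ s) →
      ∀ (hu : u ∈ s) (hv : v ∈ s), (G.induce s).Reachable ⟨u, hu⟩ ⟨v, hv⟩ := by
  intro u v p
  induction p with
  | nil => intro _ hu hv; exact Reachable.refl _
  | @cons u b v h q ih =>
    intro hp hu hv
    have hb : b ∈ s := hp b (by simp)
    have hadj : (G.induce s).Adj ⟨u, hu⟩ ⟨b, hb⟩ := h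
    exact hadj.reachable.trans (ih (fun y hy => hp y (by simp [hy])) hb hv)

/-- The main determinant computation, by induction on the number of vertices. -/
theorem aux_tree_det (n : ℕ) :
    ∀ {V : Type u} [Fintype V] [DecidableEq V] (G : SimpleGraph V) [DecidableRel G.Adj],
      Fintype.card V ≤ n → G.IsTree →
      ∀ (w : Sym2 V → ℝ) (Sig : Matrix V V ℝ),
        (∀ u v : V, ∀ p : G.Walk u v, p.IsPath → Sig u v = (p.edges.map w).prod) →
        Sig.det = ∏ e ∈ G.edgeFinset, (1 - (w e) ^ 2) := by
  induction n with
  | zero =>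
    intro V _ _ G _ hn hT w Sig hSig
    have := hT.isConnected.nonempty
    have := Fintype.card_pos (α := V)
    omega
  | succ n ih =>
    intro V _ _ G _ hn hT w Sig hSig
    have hne := hT.isConnected.nonempty
    have hpos := Fintype.card_pos (α := V)
    -- diagonal is 1
    have hdiag : ∀ v : V, Sig v v = 1 := by
      intro v
      have := hSig v v Walk.nil Walk.IsPath.nil
      simpa using this
    rcases eq_or_lt_of_le (Nat.one_le_iff_ne_zero.mpr hpos.ne') with hcard | hcard
    · -- one vertex
      obtain ⟨x, hx⟩ := Fintype.card_eq_one_iff.mp hcard.symm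
      haveI : Unique V := ⟨⟨x⟩, hx⟩
      have hE : G.edgeFinset = ∅ := by
        ext e
        refine e.ind (fun a b => ?_)
        simp only [mem_edgeFinset, mem_edgeSet, Finset.notMem_empty, iff_false]
        intro hab
        exact hab.ne (Subsingleton.elim a b)
      rw [hE, Finset.prod_empty, Matrix.det_unique, hdiag]
    · -- at least two vertices: find a leaf
      have hdegpos : ∀ v : V, 0 < G.degree v := by
        intro v
        obtain ⟨u, hu⟩ := Fintype.exists_ne_of_one_lt_card hcard v
        obtain ⟨p⟩ := hT.isConnected.preconnected v u
        have hnil : ¬ p.Nil := Walk.not_nil_of_ne (Ne.symm hu)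
        exact (G.degree_pos_iff_exists_adj v).mpr ⟨_, Walk.adj_snd hnil⟩
      have hleaf : ∃ x : V, G.degree x = 1 := by
        by_contra hno
        push_neg at hno
        have h2 : ∀ v : V, v ∈ (Finset.univ : Finset V) → 2 ≤ G.degree v := by
          intro v _
          have := hdegpos v
          have := hno v
          omega
        have hsum := Finset.card_nsmul_le_sum (Finset.univ : Finset V)
          (fun v => G.degree v) 2 h2
        rw [G.sum_degrees_eq_twice_card_edges] at hsum
        have hcE := hT.card_edgeFinset
        simp only [Finset.card_univ, smul_eq_mul] at hsum
        omega
      obtain ⟨x, hdeg⟩ := hleaf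
      obtain ⟨y, hy'⟩ := Finset.card_eq_one.mp (by rw [← hdeg]; rfl :
        (G.neighborFinset x).card = 1)
      have hy : G.Adj x y := by
        rw [← mem_neighborFinset, hy']; exact Finset.mem_singleton_self y
      have huniq : ∀ z, G.Adj x z → z = y := by
        intro z hz
        have := (mem_neighborFinset G x z).mpr hz
        rw [hy'] at this
        simpa using this
      set ω : ℝ := w s(x, y) with hω
      -- symmetry of Sig
      have hsym : ∀ u v : V, Sig u v = Sig v u := by
        intro u v
        obtain ⟨p, hp, -⟩ := hT.existsUnique_path u v
        rw [hSig u v p hp, hSig v u p.reverse hp.reverse, Walk.edges_reverse,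
          List.map_reverse, List.prod_reverse]
      have hxy : Sig x y = ω := by
        have hpath : (Walk.cons hy Walk.nil).IsPath := by simp [hy.ne]
        have := hSig x y (Walk.cons hy Walk.nil) hpath
        simpa using this
      -- recursion along the leaf edge
      have hrec : ∀ u : V, ¬ u = x → Sig x u = ω * Sig y u := by
        intro u hu
        obtain ⟨p, hp, -⟩ := hT.existsUnique_path x u
        cases p with
        | nil => exact absurd rfl hu
        | @cons _ b _ h q =>
          have hb : b = y := huniq b h
          rw [hSig x u (Walk.cons h q) hp, Walk.edges_cons, List.map_cons, List.prod_cons,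
            ← hSig b u q hp.of_cons, hb, hω]
      -- the row-reduced matrix
      set B : Matrix V V ℝ := Sig.updateRow x (Sig x + (-ω) • Sig y) with hB
      have hBdet : B.det = Sig.det := Matrix.det_updateRow_add_smul_self Sig hy.ne (-ω)
      have hBx : ∀ u : V, B x u = Sig x u - ω * Sig y u := by
        intro u
        rw [hB, Matrix.updateRow_self]
        simp [sub_eq_add_neg]
      have hBxx : B x x = 1 - ω ^ 2 := by
        rw [hBx, hdiag, hsym y x, hxy]; ring
      have hBx0 : ∀ u : V, ¬ u = x → B x u = 0 := by
        intro u hu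
        rw [hBx, hrec u hu]; ring
      have hBv : ∀ v u : V, ¬ v = x → B v u = Sig v u := by
        intro v u hv
        rw [hB, Matrix.updateRow_ne hv]
      -- set up the induced graph on the complement of x
      set s : Set V := {a | ¬ a = x} with hs
      haveI : DecidableRel (G.induce s).Adj :=
        fun a b => inferInstanceAs (Decidable (G.Adj a.1 b.1))
      have hcard' : Fintype.card ↥s ≤ n := by
        have h1 : Fintype.card {a : V // a = x} = 1 := Fintype.card_subtype_eq x
        have h2 : Fintype.card {a : V // ¬ a = x} =
            Fintype.card V - Fintype.card {a : V // a = x} :=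
          Fintype.card_subtype_compl _
        have : Fintype.card ↥s = Fintype.card {a : V // ¬ a = x} := rfl
        omega
      -- the induced graph is a tree
      have hT' : (G.induce s).IsTree := by
        constructor
        · -- connected
          haveI : Nonempty ↥s := ⟨⟨y, hy.ne'⟩⟩
          refine ⟨fun a b => ?_⟩
          obtain ⟨p, hp, -⟩ := hT.existsUnique_path (a : V) (b : V)
          have hxs : x ∉ p.support := by
            intro hxp
            have hq := hp.takeUntil hxp
            have hr := hp.dropUntil hxp
            set q := p.takeUntil x hxp with hqdef
            set r := p.dropUntil x hxp with hrdef
            have haneq : (a : V) ≠ x := a.prop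
            have hbneq : (b : V) ≠ x := b.prop
            have hqn : ¬ q.Nil := Walk.not_nil_of_ne haneq
            have hrn : ¬ r.Nil := Walk.not_nil_of_ne (Ne.symm hbneq)
            -- y appears in q.support
            have hyq : y ∈ q.support := by
              have hqrn : ¬ q.reverse.Nil := by
                rw [Walk.not_nil_iff_lt_length, Walk.length_reverse]
                rw [Walk.not_nil_iff_lt_length] at hqn
                exact hqn
              obtain ⟨c, hc, q', hq'⟩ := Walk.not_nil_iff.mp hqrn
              have hcy : c = y := huniq c hc
              have : c ∈ q.reverse.support := by rw [hq']; simp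
              rw [Walk.support_reverse, List.mem_reverse] at this
              rwa [hcy] at this
            -- y appears in r.support.tail
            have hyr : y ∈ r.support.tail := by
              obtain ⟨c, hc, r', hr'⟩ := Walk.not_nil_iff.mp hrn
              have hcy : c = y := huniq c hc
              rw [hr', Walk.support_cons]
              simpa [hcy] using r'.start_mem_support
            -- contradiction with nodup support of p
            have hnd := hp.support_nodup
            rw [← Walk.take_spec p hxp, Walk.support_append] at hnd
            rw [← hqdef, ← hrdef] at hnd
            exact (List.disjoint_of_nodup_append hnd) hyq hyr
          have hsupp : ∀ z ∈ p.support, z ∈ s := by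
            intro z hz
            intro hzx
            rw [hzx] at hz
            exact hxs hz
          have := aux_reachable_induce p hsupp a.prop b.prop
          simpa using this
        · -- acyclic
          intro u c hc
          have hinj : Function.Injective ⇑(SimpleGraph.Embedding.induce (G := G) s).toHom :=
            Subtype.val_injective
          exact hT.IsAcyclic _ (hc.map hinj)
      -- weights and matrix on the induced graph
      set w' : Sym2 ↥s → ℝ := fun e => w (e.map Subtype.val) with hw'
      set D : Matrix ↥s ↥s ℝ := Matrix.of (fun i j => Sig i.1 j.1) with hD
      have hSig' : ∀ (u v : ↥s) (p : (G.induce s).Walk u v), p.IsPath →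
          D u v = (p.edges.map w').prod := by
        intro u v p hp
        have hinj : Function.Injective ⇑(SimpleGraph.Embedding.induce (G := G) s).toHom :=
          Subtype.val_injective
        have hmp : (p.map (SimpleGraph.Embedding.induce (G := G) s).toHom).IsPath :=
          Walk.map_isPath_of_injective hinj hp
        have := hSig _ _ (p.map (SimpleGraph.Embedding.induce (G := G) s).toHom) hmp
        rw [Walk.edges_map, List.map_map] at this
        exact this
      have hDdet : D.det = ∏ e ∈ (G.induce s).edgeFinset, (1 - (w' e) ^ 2) :=
        ih (G.induce s) hcard' hT' w' D hSig'
      -- block decomposition of B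
      haveI : Unique {a : V // a = x} := ⟨⟨⟨x, rfl⟩⟩, fun a => Subtype.ext a.prop⟩
      set eqv := Equiv.sumCompl (fun a : V => a = x) with heqv
      have hblock : B.submatrix eqv eqv =
          Matrix.fromBlocks (Matrix.of fun _ _ => 1 - ω ^ 2) 0
            (Matrix.of fun i _ => Sig i.1 x) D := by
        ext i j
        cases i with
        | inl i =>
          cases j with
          | inl j =>
            simp only [Matrix.submatrix_apply, heqv, Equiv.sumCompl_apply_inl,
              Matrix.fromBlocks_apply₁₁, Matrix.of_apply]
            rw [i.prop, j.prop, hBxx]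
          | inr j =>
            simp only [Matrix.submatrix_apply, heqv, Equiv.sumCompl_apply_inl,
              Equiv.sumCompl_apply_inr, Matrix.fromBlocks_apply₁₂, Matrix.zero_apply]
            rw [i.prop, hBx0 j.1 j.prop]
        | inr i =>
          cases j with
          | inl j =>
            simp only [Matrix.submatrix_apply, heqv, Equiv.sumCompl_apply_inl,
              Equiv.sumCompl_apply_inr, Matrix.fromBlocks_apply₂₁, Matrix.of_apply]
            rw [j.prop, hBv i.1 x i.prop]
          | inr j =>
            simp only [Matrix.submatrix_apply, heqv, Equiv.sumCompl_apply_inr,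
              Matrix.fromBlocks_apply₂₂, hD, Matrix.of_apply]
            rw [hBv i.1 j.1 i.prop]
      have hBdet2 : B.det = (1 - ω ^ 2) * D.det := by
        rw [← Matrix.det_submatrix_equiv_self eqv B, hblock,
          Matrix.det_fromBlocks_zero₁₂, Matrix.det_unique]
        simp
      -- edge set decomposition
      have hxy_notin : s(x, y) ∉ (G.induce s).edgeFinset.image (Sym2.map Subtype.val) := by
        intro hmem
        obtain ⟨e', -, hme⟩ := Finset.mem_image.mp hmem
        revert hme
        refine e'.ind (fun a b => ?_)
        intro hme
        rw [Sym2.map_pair_eq, Sym2.eq_iff] at hme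
        rcases hme with ⟨ha, -⟩ | ⟨-, hb⟩
        · exact a.prop ha
        · exact b.prop hb
      have hedge : G.edgeFinset =
          insert s(x, y) ((G.induce s).edgeFinset.image (Sym2.map Subtype.val)) := by
        ext e
        refine e.ind (fun a b => ?_)
        simp only [Finset.mem_insert, Finset.mem_image, mem_edgeFinset, mem_edgeSet]
        constructor
        · intro hab
          by_cases hax : a = x
          · subst hax
            left; rw [huniq b hab]
          · by_cases hbx : b = x
            · subst hbx
              left; rw [huniq a hab.symm]; exact Sym2.eq_swap
            · right
              refine ⟨s(⟨a, hax⟩, ⟨b, hbx⟩), ?_, ?_⟩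
              · exact hab
              · rw [Sym2.map_pair_eq]
        · rintro (h | ⟨e', he', he⟩)
          · rw [← mem_edgeSet, h]; exact hy
          · rw [← mem_edgeSet, ← he]
            revert he'
            refine e'.ind (fun c d => ?_)
            intro hcd
            rw [Sym2.map_pair_eq, mem_edgeSet]
            exact hcd
      have hprodim : ∏ e ∈ (G.induce s).edgeFinset.image (Sym2.map Subtype.val),
          (1 - (w e) ^ 2) = ∏ e ∈ (G.induce s).edgeFinset, (1 - (w' e) ^ 2) := by
        rw [Finset.prod_image]
        intro e1 _ e2 _ h
        exact Sym2.map.injective Subtype.val_injective h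
      rw [← hBdet, hBdet2, hDdet, hedge, Finset.prod_insert hxy_notin, hprodim]

end Aux

/-- Let `T=(V,E)` be a finite tree with edge weights `w e ∈ (−1,1)`, and
let `Σ` be the matrix with unit diagonal and `Σ u v` the product of the weights of the
edges on the unique path from `u` to `v` (this is captured by requiring
`Σ u v = ∏ (weights along p)` for every path `p` from `u` to `v`; the empty path gives
`Σ v v = 1`).  Then `det Σ = ∏_{e∈E} (1 − w_e²)`; in particular `0 < det Σ ≤ 1`, and
`det Σ < 1` whenever some edge weight is nonzero. -/
theorem stmt_4 {V : Type*} [Fintype V] [DecidableEq V] (G : SimpleGraph V)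
    [DecidableRel G.Adj] (hT : G.IsTree)
    (w : Sym2 V → ℝ) (hw : ∀ e ∈ G.edgeSet, w e ∈ Set.Ioo (-1 : ℝ) 1)
    (Sig : Matrix V V ℝ)
    (hSig : ∀ u v : V, ∀ p : G.Walk u v, p.IsPath → Sig u v = (p.edges.map w).prod) :
    Sig.det = (∏ e ∈ G.edgeFinset, (1 - (w e) ^ 2)) ∧
      0 < Sig.det ∧ Sig.det ≤ 1 ∧
      (∀ e ∈ G.edgeSet, w e ≠ 0 → Sig.det < 1) := by
  have hdet := aux_tree_det (Fintype.card V) G le_rfl hT w Sig hSig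
  have hfac : ∀ e ∈ G.edgeFinset, 0 < 1 - (w e) ^ 2 ∧ 1 - (w e) ^ 2 ≤ 1 := by
    intro e he
    obtain ⟨h1, h2⟩ := hw e (mem_edgeFinset.mp he)
    constructor <;> nlinarith
  have hprodpos : 0 < ∏ e ∈ G.edgeFinset, (1 - (w e) ^ 2) :=
    Finset.prod_pos fun e he => (hfac e he).1
  have hprodle : (∏ e ∈ G.edgeFinset, (1 - (w e) ^ 2)) ≤ 1 :=
    Finset.prod_le_one (fun e he => le_of_lt (hfac e he).1) (fun e he => (hfac e he).2)
  refine ⟨hdet, by rw [hdet]; exact hprodpos, by rw [hdet]; exact hprodle, ?_⟩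
  intro e he hne
  have heF : e ∈ G.edgeFinset := mem_edgeFinset.mpr he
  obtain ⟨h1, h2⟩ := hw e he
  have hlt : 1 - (w e) ^ 2 < 1 := by nlinarith [sq_pos_of_ne_zero hne]
  have hrest_pos : 0 < ∏ f ∈ G.edgeFinset.erase e, (1 - (w f) ^ 2) :=
    Finset.prod_pos fun f hf => (hfac f (Finset.mem_of_mem_erase hf)).1
  have hrest_le : (∏ f ∈ G.edgeFinset.erase e, (1 - (w f) ^ 2)) ≤ 1 :=
    Finset.prod_le_one (fun f hf => le_of_lt (hfac f (Finset.mem_of_mem_erase hf)).1)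
      (fun f hf => (hfac f (Finset.mem_of_mem_erase hf)).2)
  rw [hdet, ← Finset.mul_prod_erase _ _ heF]
  have hfe := hfac e heF
  nlinarith
end

section
/- Let T1 = (V,E,W) be a weighted tree with |V| ≥ 3 having a leaf vertex n2 whose unique neighbor n1 has degree 2, and let v be the other neighbor of n1. Let T2 = (V,E',W') be the weighted tree obtained from T1 by the grafting operation (deleting edge {n1,n2} and adding edge {v,n2} with the same weight, all other weights unchanged). Then S(T1,W) ≥ S(T2,W'): grafting never increases the maximin value. -/
open SimpleGraph

/-- The squared partial correlation coefficient
`ρ²_{ab|z} = (σ_ab − σ_az·σ_bz)² / ((1 − σ_az²)·(1 − σ_bz²))`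
for a covariance function `σ` with unit diagonal. -/
noncomputable def rho2 {V : Type*} (σ : V → V → ℝ) (a b z : V) : ℝ :=
  (σ a b - σ a z * σ b z) ^ 2 / ((1 - (σ a z) ^ 2) * (1 - (σ b z) ^ 2))

/-- The maximin value `S(T,W) = max_{{a,b}} min_{z∉{a,b}} ρ²_{ab|z}`, expressed with
suprema/infima of the (finite, nonempty) sets of attained values. -/
noncomputable def maximin {V : Type*} (σ : V → V → ℝ) : ℝ :=
  sSup {x : ℝ | ∃ a b : V, a ≠ b ∧
    x = sInf {y : ℝ | ∃ z : V, z ≠ a ∧ z ≠ b ∧ y = rho2 σ a b z}}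

namespace Stmt6Aux

set_option linter.unusedSectionVars false

/-! ### Pure algebra lemmas -/

private lemma myFracMono (A B N t t' : ℝ) (hA : A^2 ≤ 1) (hB : B^2 ≤ 1)
    (h0 : 0 ≤ t') (h1 : t' ≤ t) (h2 : t < 1) :
    N^2*(1-t)^2/((1-A^2*t)*(1-B^2*t)) ≤ N^2*(1-t')^2/((1-A^2*t')*(1-B^2*t')) := by
  have ht0 : 0 ≤ t := le_trans h0 h1
  have dA : 0 < 1 - A^2*t := by nlinarith
  have dB : 0 < 1 - B^2*t := by nlinarith
  have dA' : 0 < 1 - A^2*t' := by nlinarith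
  have dB' : 0 < 1 - B^2*t' := by nlinarith
  rw [div_le_div_iff₀ (by positivity) (by positivity)]
  have kA : (1-t)*(1-A^2*t') ≤ (1-t')*(1-A^2*t) := by nlinarith
  have kB : (1-t)*(1-B^2*t') ≤ (1-t')*(1-B^2*t) := by nlinarith
  have hP : ((1-t)*(1-A^2*t'))*((1-t)*(1-B^2*t')) ≤ ((1-t')*(1-A^2*t))*((1-t')*(1-B^2*t)) :=
    mul_le_mul kA kB (by nlinarith) (by nlinarith)
  nlinarith [mul_le_mul_of_nonneg_left hP (sq_nonneg N)]

private lemma myAlgMain (A B U wa wb : ℝ) (hA : A^2 ≤ 1) (hB : B^2 ≤ 1) (hU : U^2 ≤ 1)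
    (ha : wa^2 ≤ 1) (hb : wb^2 < 1) :
    (A*B - (A*U*wb)*(B*U*wb))^2 / ((1-(A*U*wb)^2)*(1-(B*U*wb)^2)) ≤
    (A*B - (A*U*(wa*wb))*(B*U*(wa*wb)))^2 / ((1-(A*U*(wa*wb))^2)*(1-(B*U*(wa*wb))^2)) := by
  have key := myFracMono A B (A*B) (U^2*wb^2) (wa^2*(U^2*wb^2)) hA hB (by positivity)
    (by nlinarith [mul_le_mul_of_nonneg_right ha (by positivity : (0:ℝ) ≤ U^2*wb^2)])
    (by nlinarith [mul_le_mul_of_nonneg_right hU (sq_nonneg wb)])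
  calc (A*B - (A*U*wb)*(B*U*wb))^2 / ((1-(A*U*wb)^2)*(1-(B*U*wb)^2))
      = (A*B)^2*(1-U^2*wb^2)^2/((1-A^2*(U^2*wb^2))*(1-B^2*(U^2*wb^2))) := by ring_nf
    _ ≤ (A*B)^2*(1-wa^2*(U^2*wb^2))^2/((1-A^2*(wa^2*(U^2*wb^2)))*(1-B^2*(wa^2*(U^2*wb^2)))) := key
    _ = (A*B - (A*U*(wa*wb))*(B*U*(wa*wb)))^2 / ((1-(A*U*(wa*wb))^2)*(1-(B*U*(wa*wb))^2)) := by
        ring_nf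

private lemma myAlgN1 (wa wb β : ℝ) (ha : wa^2 < 1) (hb : wb^2 < 1) (hβ : β^2 ≤ 1) :
    (wa*β - (wa*wb)*(β*wb))^2/((1-(wa*wb)^2)*(1-(β*wb)^2)) ≤
    (wa*β - wb*(β*(wa*wb)))^2/((1-wb^2)*(1-(β*(wa*wb))^2)) := by
  have d1 : 0 < 1 - (wa*wb)^2 := by nlinarith
  have d2 : 0 < 1 - (β*wb)^2 := by nlinarith
  have d3 : 0 < 1 - wb^2 := by nlinarith
  have d4 : 0 < 1 - (β*(wa*wb))^2 := by nlinarith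
  rw [div_le_div_iff₀ (by positivity) (by positivity)]
  have hD : (1-wb^2)*(1-(β*(wa*wb))^2) ≤ (1-(wa*wb)^2)*(1-(β*wb)^2) := by
    nlinarith [mul_nonneg (mul_nonneg (sq_nonneg wb) (by nlinarith : (0:ℝ) ≤ 1 - wa^2))
      (by nlinarith : (0:ℝ) ≤ 1 - β^2)]
  nlinarith [mul_le_mul_of_nonneg_left hD (sq_nonneg (wa*β - (wa*wb)*(β*wb))),
    sq_nonneg (wa*β - (wa*wb)*(β*wb))]

private lemma myAlgV (wa wb t : ℝ) (ha : wa^2 < 1) (hb : wb^2 < 1) (ht : t^2 ≤ wa^2) :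
    (wb - wa*(wa*wb))^2/((1-wa^2)*(1-(wa*wb)^2)) ≤
    (wb - t*(t*wb))^2/((1-t^2)*(1-(t*wb)^2)) := by
  have ht0 : 0 ≤ t^2 := sq_nonneg t
  have d1 : 0 < 1 - wa^2 := by nlinarith
  have d2 : 0 < 1 - (wa*wb)^2 := by nlinarith
  have d3 : 0 < 1 - t^2 := by nlinarith
  have d4 : 0 < 1 - (t*wb)^2 := by nlinarith
  rw [div_le_div_iff₀ (by positivity) (by positivity)]
  have hk : (1-wa^2)*(1-t^2*wb^2) ≤ (1-t^2)*(1-wa^2*wb^2) := by nlinarith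
  nlinarith [mul_le_mul_of_nonneg_left hk (mul_nonneg (mul_nonneg (sq_nonneg wb) d1.le) d3.le),
    sq_nonneg wb, mul_pos d1 d3]

private lemma sqLeOne {x : ℝ} (h : |x| ≤ 1) : x^2 ≤ 1 := by
  obtain ⟨h1, h2⟩ := abs_le.mp h; nlinarith

private lemma sqLtOne {x : ℝ} (h : |x| < 1) : x^2 < 1 := by
  obtain ⟨h1, h2⟩ := abs_lt.mp h; nlinarith

/-! ### Generic graph lemmas -/

variable {V : Type*} [DecidableEq V] {G : SimpleGraph V} {w : Sym2 V → ℝ} {σ : V → V → ℝ}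

private lemma listBound : ∀ (l : List ℝ), (∀ x ∈ l, |x| < 1) → |l.prod| ≤ 1 ∧ (l ≠ [] → |l.prod| < 1) := by
  intro l
  induction l with
  | nil => simp
  | cons a l ih =>
    intro h
    have ha : |a| < 1 := h a (by simp)
    have hl := ih (fun x hx => h x (by simp [hx]))
    have h0 : 0 ≤ |a| := abs_nonneg a
    have h1 : |a * l.prod| = |a| * |l.prod| := abs_mul _ _
    constructor
    · rw [List.prod_cons, h1]
      nlinarith [hl.1, abs_nonneg l.prod]
    · intro _
      rw [List.prod_cons, h1]
      nlinarith [hl.1, abs_nonneg l.prod]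

private lemma sigOne (hσ : ∀ u u', ∀ p : G.Walk u u', p.IsPath → σ u u' = (p.edges.map w).prod)
    (u : V) : σ u u = 1 := by
  simpa using hσ u u Walk.nil Walk.IsPath.nil

private lemma sigSymm (hσ : ∀ u u', ∀ p : G.Walk u u', p.IsPath → σ u u' = (p.edges.map w).prod)
    (hc : G.Connected) (a b : V) : σ a b = σ b a := by
  obtain ⟨p, hp⟩ := ((hc a b).some.toPath : G.Path a b)
  rw [hσ a b p hp, hσ b a p.reverse hp.reverse, Walk.edges_reverse, List.map_reverse,
    List.prod_reverse]

private lemma sigBound (hσ : ∀ u u', ∀ p : G.Walk u u', p.IsPath → σ u u' = (p.edges.map w).prod)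
    (hc : G.Connected) (hw : ∀ e ∈ G.edgeSet, |w e| < 1) (a b : V) :
    |σ a b| ≤ 1 ∧ (a ≠ b → |σ a b| < 1) := by
  obtain ⟨p, hp⟩ := ((hc a b).some.toPath : G.Path a b)
  rw [hσ a b p hp]
  have hb : ∀ x ∈ p.edges.map w, |x| < 1 := by
    intro x hx
    obtain ⟨e, he, rfl⟩ := List.mem_map.mp hx
    exact hw e (p.edges_subset_edgeSet he)
  refine ⟨(listBound _ hb).1, fun hab => (listBound _ hb).2 ?_⟩
  cases p with
  | nil => exact absurd rfl hab
  | cons h q => simp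

private lemma sigMul (hσ : ∀ u u', ∀ p : G.Walk u u', p.IsPath → σ u u' = (p.edges.map w).prod)
    {a b m : V} (p : G.Walk a b) (hp : p.IsPath) (hm : m ∈ p.support) :
    σ a b = σ a m * σ m b := by
  rw [hσ a m (p.takeUntil m hm) (hp.takeUntil hm), hσ m b (p.dropUntil m hm) (hp.dropUntil hm),
    ← List.prod_append, ← List.map_append, ← Walk.edges_append, Walk.take_spec,
    hσ a b p hp]

private lemma isPathAppend {a b c : V} {p : G.Walk a b} {q : G.Walk b c} (hp : p.IsPath)
    (hq : q.IsPath) (h : ∀ x ∈ p.support, x ∈ q.support → x = b) : (p.append q).IsPath := by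
  rw [Walk.isPath_def, Walk.support_append]
  have hqn := hq.support_nodup
  rw [q.support_eq_cons] at hqn
  rw [List.nodup_cons] at hqn
  refine List.Nodup.append hp.support_nodup hqn.2 ?_
  intro x hx1 hx2
  have hx2' : x ∈ q.support := by rw [q.support_eq_cons]; exact List.mem_cons_of_mem _ hx2
  have := h x hx1 hx2'
  subst this
  exact hqn.1 hx2

private lemma leafSupportAux {l nb : V} (hN : G.neighborSet l = {nb}) :
    ∀ {x : V} (q : G.Walk l x), x ≠ l → nb ∈ q.support := by
  intro x q hx
  cases q with
  | nil => exact absurd rfl hx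
  | cons h q' =>
    rename_i y
    have hy : y ∈ G.neighborSet l := h
    rw [hN, Set.mem_singleton_iff] at hy
    subst hy
    rw [Walk.support_cons]
    exact List.mem_cons_of_mem _ q'.start_mem_support

private lemma leafSupport {l nb : V} (hN : G.neighborSet l = {nb}) {x : V} (p : G.Walk x l)
    (hx : x ≠ l) : nb ∈ p.support := by
  have := leafSupportAux hN p.reverse hx
  rwa [Walk.support_reverse, List.mem_reverse] at this

private lemma firstMeet : ∀ {c a : V} (r : G.Walk c a), r.IsPath → ∀ (L : List V), a ∈ L →
    ∃ (m : V) (r1 : G.Walk c m), r1.IsPath ∧ m ∈ r.support ∧ m ∈ L ∧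
      (∀ x ∈ r1.support, x ∈ L → x = m) ∧ r1.support ⊆ r.support
  | c, _, Walk.nil, hr, L, ha =>
    ⟨c, Walk.nil, Walk.IsPath.nil, by simp, ha, by simp, by simp⟩
  | c, a, Walk.cons h' r', hr, L, ha => by
    by_cases hc : c ∈ L
    · exact ⟨c, Walk.nil, Walk.IsPath.nil, by simp, hc, by simp, by simp⟩
    · obtain ⟨m, r1, h1, h2, h3, h4, h5⟩ := firstMeet r' hr.of_cons L ha
      have hcns : c ∉ r'.support := ((Walk.cons_isPath_iff _ _).mp hr).2
      refine ⟨m, Walk.cons h' r1, h1.cons (fun hmem => hcns (h5 hmem)), ?_, h3, ?_, ?_⟩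
      · rw [Walk.support_cons]; exact List.mem_cons_of_mem _ h2
      · intro x hx hxL
        rw [Walk.support_cons, List.mem_cons] at hx
        rcases hx with rfl | hx
        · exact absurd hxL hc
        · exact h4 x hx hxL
      · rw [Walk.support_cons, Walk.support_cons]
        exact List.cons_subset_cons _ h5

private lemma median (hσ : ∀ u u', ∀ p : G.Walk u u', p.IsPath → σ u u' = (p.edges.map w).prod)
    (hc : G.Connected) (a b v : V) :
    ∃ m : V, σ a b = σ a m * σ m b ∧ σ a v = σ a m * σ m v ∧ σ b v = σ b m * σ m v := by
  obtain ⟨p, hp⟩ := ((hc a b).some.toPath : G.Path a b)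
  obtain ⟨r, hr⟩ := ((hc v a).some.toPath : G.Path v a)
  obtain ⟨m, r1, h1, h2, h3, h4, h5⟩ := firstMeet r hr p.support p.start_mem_support
  refine ⟨m, sigMul hσ p hp h3, ?_, ?_⟩
  · have hva : σ v a = σ v m * σ m a := sigMul hσ r hr h2
    rw [sigSymm hσ hc a v, hva, sigSymm hσ hc v m, sigSymm hσ hc m a]
    ring
  · have hdp : (p.dropUntil m h3).reverse.IsPath := (hp.dropUntil h3).reverse
    have hr1 : r1.reverse.IsPath := h1.reverse
    have hdis : ∀ x ∈ (p.dropUntil m h3).reverse.support, x ∈ r1.reverse.support → x = m := by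
      intro x hx1 hx2
      rw [Walk.support_reverse, List.mem_reverse] at hx1 hx2
      exact h4 x hx2 (p.support_dropUntil_subset h3 hx1)
    have hq : ((p.dropUntil m h3).reverse.append r1.reverse).IsPath :=
      isPathAppend hdp hr1 hdis
    rw [hσ b v _ hq, Walk.edges_append, List.map_append, List.prod_append,
      ← hσ b m _ hdp, ← hσ m v _ hr1]

/-! ### maximin glue lemmas -/

private lemma rho2Symm (σ : V → V → ℝ) {a b : V} (h : σ a b = σ b a) (z : V) :
    rho2 σ a b z = rho2 σ b a z := by
  unfold rho2; rw [h]; ring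

private lemma zsetFinite [Fintype V] (σ : V → V → ℝ) (a b : V) :
    ({y : ℝ | ∃ z : V, z ≠ a ∧ z ≠ b ∧ y = rho2 σ a b z}).Finite := by
  apply Set.Finite.subset (Set.finite_range (fun z : V => rho2 σ a b z))
  rintro y ⟨z, _, _, rfl⟩
  exact ⟨z, rfl⟩

private lemma le_maximin [Fintype V] (σ : V → V → ℝ) (a b : V) (hab : a ≠ b) :
    sInf {y : ℝ | ∃ z : V, z ≠ a ∧ z ≠ b ∧ y = rho2 σ a b z} ≤ maximin σ := by
  refine le_csSup ?_ (Set.mem_setOf_eq ▸ ⟨a, b, hab, rfl⟩)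
  apply Set.Finite.bddAbove
  apply Set.Finite.subset (Set.finite_range
    (fun p : V × V => sInf {y : ℝ | ∃ z : V, z ≠ p.1 ∧ z ≠ p.2 ∧ y = rho2 σ p.1 p.2 z}))
  rintro x ⟨a, b, hab, rfl⟩
  exact ⟨(a, b), rfl⟩

private lemma maximin_le_of [Fintype V] (σ σ' : V → V → ℝ) (h0 : 0 ≤ maximin σ')
    (h : ∀ a b : V, a ≠ b →
      sInf {y : ℝ | ∃ z : V, z ≠ a ∧ z ≠ b ∧ y = rho2 σ a b z} ≤ maximin σ') :
    maximin σ ≤ maximin σ' := by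
  apply Real.sSup_le ?_ h0
  rintro x ⟨a, b, hab, rfl⟩
  exact h a b hab

end Stmt6Aux

open Stmt6Aux in
/-- Let `T1` be a weighted tree with `|V| ≥ 3`, having a leaf `n2` whose
unique neighbor `n1` has degree 2, and let `v` be the other neighbor of `n1`.  Let `T2`
be obtained from `T1` by grafting (deleting edge `{n1,n2}`, adding edge `{v,n2}` with
the same weight, all other weights unchanged).  Here the covariance `σᵢ u u'` is the
product of the weights along the unique path in `Tᵢ` from `u` to `u'` (with `σᵢ u u = 1`).
Then `S(T1,W) ≥ S(T2,W')`: grafting never increases the maximin value. -/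
theorem stmt_6 {V : Type*} [Fintype V] [DecidableEq V] (hcard : 3 ≤ Fintype.card V)
    (G1 G2 : SimpleGraph V) (hT1 : G1.IsTree) (hT2 : G2.IsTree)
    (n1 n2 v : V)
    (hadj : G1.Adj n1 n2) (hleaf : (G1.neighborSet n2).ncard = 1)
    (hdeg : (G1.neighborSet n1).ncard = 2)
    (hadjv : G1.Adj n1 v) (hvne : v ≠ n2)
    (hG2 : G2 = G1.deleteEdges {s(n1, n2)} ⊔ fromEdgeSet {s(v, n2)})
    (w1 w2 : Sym2 V → ℝ)
    (hw1 : ∀ e ∈ G1.edgeSet, w1 e ∈ Set.Ioo (-1 : ℝ) 1 ∧ w1 e ≠ 0)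
    (hshare : ∀ e ∈ G1.edgeSet, e ≠ s(n1, n2) → w2 e = w1 e)
    (hnew : w2 s(v, n2) = w1 s(n1, n2))
    (σ1 σ2 : V → V → ℝ)
    (hσ1 : ∀ u u' : V, ∀ p : G1.Walk u u', p.IsPath → σ1 u u' = (p.edges.map w1).prod)
    (hσ2 : ∀ u u' : V, ∀ p : G2.Walk u u', p.IsPath → σ2 u u' = (p.edges.map w2).prod) :
    maximin σ2 ≤ maximin σ1 := by
  classical
  have hn12 : n1 ≠ n2 := hadj.ne
  have hn1v : n1 ≠ v := hadjv.ne
  have hc1 : G1.Connected := hT1.isConnected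
  have hc2 : G2.Connected := hT2.isConnected
  have hw1' : ∀ e ∈ G1.edgeSet, |w1 e| < 1 := fun e he =>
    abs_lt.mpr ⟨(hw1 e he).1.1, (hw1 e he).1.2⟩
  have hwaB : |w1 s(n1, v)| < 1 := hw1' _ (G1.mem_edgeSet.mpr hadjv)
  have hwbB : |w1 s(n1, n2)| < 1 := hw1' _ (G1.mem_edgeSet.mpr hadj)
  have hwa2 : (w1 s(n1, v))^2 < 1 := sqLtOne hwaB
  have hwb2 : (w1 s(n1, n2))^2 < 1 := sqLtOne hwbB
  have hN2 : G1.neighborSet n2 = {n1} := by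
    obtain ⟨x, hx⟩ := Set.ncard_eq_one.mp hleaf
    have hm : n1 ∈ G1.neighborSet n2 := hadj.symm
    rw [hx] at hm
    rw [hx, Set.mem_singleton_iff.mp hm]
  have hN1 : G1.neighborSet n1 = {v, n2} := by
    refine (Set.eq_of_subset_of_ncard_le ?_ ?_ (Set.toFinite _)).symm
    · rintro x (rfl | rfl)
      · exact hadjv
      · exact hadj
    · rw [hdeg, Set.ncard_pair hvne]
  have hno : ∀ {a b : V} (p : G1.Walk a b), p.IsPath → a ≠ n2 → b ≠ n2 → n2 ∉ p.support := by
    intro a b p hp ha hb hmem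
    have hn1q1 : n1 ∈ (p.takeUntil n2 hmem).support := leafSupport hN2 _ ha
    have hn1q2 : n1 ∈ (p.dropUntil n2 hmem).support := by
      have := leafSupport hN2 (p.dropUntil n2 hmem).reverse hb
      rwa [Walk.support_reverse, List.mem_reverse] at this
    have hnd := hp.support_nodup
    rw [← Walk.take_spec p hmem, Walk.support_append] at hnd
    have hdisj := List.disjoint_of_nodup_append hnd
    have htail : n1 ∈ (p.dropUntil n2 hmem).support.tail := by
      have hcons := (p.dropUntil n2 hmem).support_eq_cons
      rw [hcons, List.mem_cons] at hn1q2
      rcases hn1q2 with h | h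
      · exact absurd h hn12
      · exact h
    exact hdisj hn1q1 htail
  have hedgeval : ∀ {x y : V} (h : G1.Adj x y), σ1 x y = w1 s(x, y) := by
    intro x y h
    have hp : (Walk.cons h Walk.nil : G1.Walk x y).IsPath := by
      rw [Walk.isPath_def]; simp [h.ne]
    simpa using hσ1 x y _ hp
  have hv12 : σ1 n1 n2 = w1 s(n1, n2) := hedgeval hadj
  have hv1v : σ1 n1 v = w1 s(n1, v) := hedgeval hadjv
  have S1 : ∀ a b : V, σ1 a b = σ1 b a := sigSymm hσ1 hc1
  have S2 : ∀ a b : V, σ2 a b = σ2 b a := sigSymm hσ2 hc2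
  have c2 : ∀ x : V, x ≠ n2 → σ1 x n2 = σ1 x n1 * w1 s(n1, n2) := by
    intro x hx
    obtain ⟨p, hp⟩ := ((hc1 x n2).some.toPath : G1.Path x n2)
    rw [sigMul hσ1 p hp (leafSupport hN2 p hx), hv12]
  have c3 : ∀ x : V, x ≠ n1 → x ≠ n2 → σ1 x n1 = σ1 x v * w1 s(n1, v) := by
    intro x hx1 hx2
    obtain ⟨p, hp⟩ := ((hc1 n1 x).some.toPath : G1.Path n1 x)
    have hvmem : v ∈ p.support := by
      cases p with
      | nil => exact absurd rfl hx1
      | cons h q' =>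
        rename_i y
        have hy : y ∈ G1.neighborSet n1 := h
        rw [hN1] at hy
        simp only [Set.mem_insert_iff, Set.mem_singleton_iff] at hy
        rcases hy with rfl | rfl
        · rw [Walk.support_cons]
          exact List.mem_cons_of_mem _ q'.start_mem_support
        · exfalso
          apply hno _ hp hn12 hx2
          rw [Walk.support_cons]
          exact List.mem_cons_of_mem _ q'.start_mem_support
    rw [S1 x n1, sigMul hσ1 p hp hvmem, hv1v, S1 v x]
    ring
  have hA2 : ∀ x : V, G2.Adj x n2 ↔ x = v := by
    intro x
    rw [hG2]
    simp only [sup_adj, deleteEdges_adj, fromEdgeSet_adj, Set.mem_singleton_iff]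
    constructor
    · rintro (⟨h1, h2⟩ | ⟨h1, h2⟩)
      · exfalso
        have hm : x ∈ G1.neighborSet n2 := h1.symm
        rw [hN2, Set.mem_singleton_iff] at hm
        subst hm
        exact h2 rfl
      · rcases Sym2.eq_iff.mp h1 with ⟨rfl, -⟩ | ⟨rfl, rfl⟩
        · rfl
        · exact absurd rfl h2
    · rintro rfl
      exact Or.inr ⟨rfl, hvne⟩
  have hN2' : G2.neighborSet n2 = {v} := by
    ext x
    rw [mem_neighborSet, Set.mem_singleton_iff, adj_comm]
    exact hA2 x
  have hadj2vn2 : G2.Adj v n2 := (hA2 v).mpr rfl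
  have hv2 : σ2 v n2 = w1 s(n1, n2) := by
    have hp : (Walk.cons hadj2vn2 Walk.nil : G2.Walk v n2).IsPath := by
      rw [Walk.isPath_def]; simp [hvne]
    have := hσ2 v n2 _ hp
    simpa [hnew] using this
  have c5 : ∀ a b : V, a ≠ n2 → b ≠ n2 → σ2 a b = σ1 a b := by
    intro a b ha hb
    obtain ⟨p, hp⟩ := ((hc1 a b).some.toPath : G1.Path a b)
    have hnosup : n2 ∉ p.support := hno p hp ha hb
    have hne : ∀ e ∈ p.edges, e ≠ s(n1, n2) := by
      rintro e he rfl
      exact hnosup (p.snd_mem_support_of_mem_edges he)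
    have hedge : ∀ e ∈ p.edges, e ∈ G2.edgeSet := by
      intro e he
      rw [hG2, edgeSet_sup]
      left
      rw [edgeSet_deleteEdges]
      exact ⟨p.edges_subset_edgeSet he, by simpa using hne e he⟩
    rw [hσ2 a b (p.transfer G2 hedge) (hp.transfer hedge), Walk.edges_transfer, hσ1 a b p hp]
    congr 1
    apply List.map_congr_left
    intro e he
    exact hshare e (p.edges_subset_edgeSet he) (hne e he)
  have c4 : ∀ x : V, x ≠ n2 → σ2 x n2 = σ1 x v * w1 s(n1, n2) := by
    intro x hx
    obtain ⟨p, hp⟩ := ((hc2 x n2).some.toPath : G2.Path x n2)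
    rw [sigMul hσ2 p hp (leafSupport hN2' p hx), hv2, c5 x v hx hvne]
  have hw2' : ∀ e ∈ G2.edgeSet, |w2 e| < 1 := by
    intro e he
    rw [hG2, edgeSet_sup] at he
    rcases he with he | he
    · rw [edgeSet_deleteEdges] at he
      rw [hshare e he.1 (by simpa using he.2)]
      exact hw1' e he.1
    · rw [edgeSet_fromEdgeSet] at he
      obtain ⟨he1, -⟩ := he
      rw [Set.mem_singleton_iff] at he1
      subst he1
      rw [hnew]
      exact hwbB
  have B1 := sigBound hσ1 hc1 hw1'
  have rho1nonneg : ∀ a b z : V, z ≠ a → z ≠ b → 0 ≤ rho2 σ1 a b z := by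
    intro a b z hza hzb
    have h1 : (σ1 a z)^2 < 1 := sqLtOne ((B1 a z).2 (Ne.symm hza))
    have h2 : (σ1 b z)^2 < 1 := sqLtOne ((B1 b z).2 (Ne.symm hzb))
    unfold rho2
    exact div_nonneg (sq_nonneg _) (by nlinarith)
  have hZex : ∀ a b : V, ∃ z : V, z ≠ a ∧ z ≠ b := by
    intro a b
    by_contra hcon
    push_neg at hcon
    have hsub : (Finset.univ : Finset V) ⊆ {a, b} := by
      intro z _
      simp only [Finset.mem_insert, Finset.mem_singleton]
      rcases eq_or_ne z a with rfl | hz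
      · exact Or.inl rfl
      · exact Or.inr (hcon z hz)
    have h1 := Finset.card_le_card hsub
    have h2 : ({a, b} : Finset V).card ≤ 2 :=
      le_trans (Finset.card_insert_le a {b}) (by simp)
    rw [Finset.card_univ] at h1
    omega
  have hZne : ∀ (σ : V → V → ℝ) (a b : V),
      ({y : ℝ | ∃ z : V, z ≠ a ∧ z ≠ b ∧ y = rho2 σ a b z}).Nonempty := by
    intro σ a b
    obtain ⟨z, h1, h2⟩ := hZex a b
    exact ⟨rho2 σ a b z, z, h1, h2, rfl⟩
  have h0 : 0 ≤ maximin σ1 := by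
    obtain ⟨a, b, hab⟩ := Fintype.exists_pair_of_one_lt_card (α := V) (by omega)
    refine le_trans (le_csInf (hZne σ1 a b) ?_) (le_maximin σ1 a b hab)
    rintro y ⟨z, h1, h2, rfl⟩
    exact rho1nonneg a b z h1 h2
  have hKEYn1 : ∀ b : V, b ≠ n1 → b ≠ n2 → rho2 σ2 n1 b n2 ≤ rho2 σ1 n1 b n2 := by
    intro b hb1 hb2
    have hβ : (σ1 b v)^2 ≤ 1 := sqLeOne (B1 b v).1
    have e1 : σ1 n1 b = w1 s(n1, v) * σ1 b v := by
      rw [S1 n1 b, c3 b hb1 hb2]; ring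
    have e2 : σ2 n1 b = w1 s(n1, v) * σ1 b v := by rw [c5 n1 b hn12 hb2, e1]
    have e3 : σ2 n1 n2 = w1 s(n1, v) * w1 s(n1, n2) := by rw [c4 n1 hn12, hv1v]
    have e4 : σ2 b n2 = σ1 b v * w1 s(n1, n2) := c4 b hb2
    have e6 : σ1 b n2 = σ1 b v * w1 s(n1, v) * w1 s(n1, n2) := by
      rw [c2 b hb2, c3 b hb1 hb2]
    calc rho2 σ2 n1 b n2
        = (w1 s(n1,v)*σ1 b v - (w1 s(n1,v)*w1 s(n1,n2))*(σ1 b v*w1 s(n1,n2)))^2 /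
          ((1-(w1 s(n1,v)*w1 s(n1,n2))^2)*(1-(σ1 b v*w1 s(n1,n2))^2)) := by
          unfold rho2; rw [e2, e3, e4]
      _ ≤ (w1 s(n1,v)*σ1 b v - w1 s(n1,n2)*(σ1 b v*(w1 s(n1,v)*w1 s(n1,n2))))^2 /
          ((1-(w1 s(n1,n2))^2)*(1-(σ1 b v*(w1 s(n1,v)*w1 s(n1,n2)))^2)) :=
          myAlgN1 _ _ _ hwa2 hwb2 hβ
      _ = rho2 σ1 n1 b n2 := by unfold rho2; rw [e1, hv12, e6]; ring
  have hKEY : ∀ a b : V, a ≠ n2 → b ≠ n2 → a ≠ b → rho2 σ2 a b n2 ≤ rho2 σ1 a b n2 := by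
    intro a b ha hb hab
    by_cases ha1 : a = n1
    · subst ha1; exact hKEYn1 b (Ne.symm hab) hb
    by_cases hb1 : b = n1
    · rw [hb1]
      calc rho2 σ2 a n1 n2 = rho2 σ2 n1 a n2 := rho2Symm σ2 (S2 a n1) n2
        _ ≤ rho2 σ1 n1 a n2 := hKEYn1 a ha1 ha
        _ = rho2 σ1 a n1 n2 := (rho2Symm σ1 (S1 a n1) n2).symm
    · obtain ⟨m, hm1, hm2, hm3⟩ := median hσ1 hc1 a b v
      have hA : (σ1 a m)^2 ≤ 1 := sqLeOne (B1 a m).1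
      have hB : (σ1 m b)^2 ≤ 1 := sqLeOne (B1 m b).1
      have hU : (σ1 m v)^2 ≤ 1 := sqLeOne (B1 m v).1
      have e1 : σ2 a b = σ1 a m * σ1 m b := by rw [c5 a b ha hb, hm1]
      have e2 : σ2 a n2 = σ1 a m * σ1 m v * w1 s(n1, n2) := by rw [c4 a ha, hm2]
      have e3 : σ2 b n2 = σ1 m b * σ1 m v * w1 s(n1, n2) := by
        rw [c4 b hb, hm3, S1 b m]
      have e5 : σ1 a n2 = σ1 a m * σ1 m v * (w1 s(n1, v) * w1 s(n1, n2)) := by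
        rw [c2 a ha, c3 a ha1 ha, hm2]; ring
      have e6 : σ1 b n2 = σ1 m b * σ1 m v * (w1 s(n1, v) * w1 s(n1, n2)) := by
        rw [c2 b hb, c3 b hb1 hb, hm3, S1 b m]; ring
      calc rho2 σ2 a b n2
          = (σ1 a m*σ1 m b - (σ1 a m*σ1 m v*w1 s(n1,n2))*(σ1 m b*σ1 m v*w1 s(n1,n2)))^2 /
            ((1-(σ1 a m*σ1 m v*w1 s(n1,n2))^2)*(1-(σ1 m b*σ1 m v*w1 s(n1,n2))^2)) := by
            unfold rho2; rw [e1, e2, e3]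
        _ ≤ (σ1 a m*σ1 m b - (σ1 a m*σ1 m v*(w1 s(n1,v)*w1 s(n1,n2)))*(σ1 m b*σ1 m v*(w1 s(n1,v)*w1 s(n1,n2))))^2 /
            ((1-(σ1 a m*σ1 m v*(w1 s(n1,v)*w1 s(n1,n2)))^2)*(1-(σ1 m b*σ1 m v*(w1 s(n1,v)*w1 s(n1,n2)))^2)) :=
            myAlgMain _ _ _ _ _ hA hB hU hwa2.le hwb2
        _ = rho2 σ1 a b n2 := by unfold rho2; rw [hm1, e5, e6]
  have key : ∀ a b : V, a ≠ n2 → b ≠ n2 → a ≠ b →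
      sInf {y : ℝ | ∃ z : V, z ≠ a ∧ z ≠ b ∧ y = rho2 σ2 a b z} ≤ maximin σ1 := by
    intro a b ha hb hab
    refine le_trans (le_csInf (hZne σ1 a b) ?_) (le_maximin σ1 a b hab)
    rintro y ⟨z, hza, hzb, rfl⟩
    by_cases hz2 : z = n2
    · rw [hz2]
      exact le_trans (csInf_le (zsetFinite σ2 a b).bddBelow ⟨n2, hz2 ▸ hza, hz2 ▸ hzb, rfl⟩)
        (hKEY a b ha hb hab)
    · have heq : rho2 σ2 a b z = rho2 σ1 a b z := by
        unfold rho2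
        rw [c5 a b ha hb, c5 a z ha hz2, c5 b z hb hz2]
      exact (csInf_le (zsetFinite σ2 a b).bddBelow ⟨z, hza, hzb, rfl⟩).trans heq.le
  have keyN2 : ∀ a : V, a ≠ n2 → a ≠ v →
      sInf {y : ℝ | ∃ z : V, z ≠ a ∧ z ≠ n2 ∧ y = rho2 σ2 a n2 z} ≤ maximin σ1 := by
    intro a ha hav
    have hzero : rho2 σ2 a n2 v = 0 := by
      have hnum : σ2 a n2 - σ2 a v * σ2 n2 v = 0 := by
        rw [c4 a ha, c5 a v ha hvne, S2 n2 v, hv2]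
        ring
      unfold rho2
      rw [hnum]
      simp
    calc sInf {y : ℝ | ∃ z : V, z ≠ a ∧ z ≠ n2 ∧ y = rho2 σ2 a n2 z}
        ≤ rho2 σ2 a n2 v := csInf_le (zsetFinite σ2 a n2).bddBelow ⟨v, Ne.symm hav, hvne, rfl⟩
      _ = 0 := hzero
      _ ≤ maximin σ1 := h0
  have keyVN2 : sInf {y : ℝ | ∃ z : V, z ≠ v ∧ z ≠ n2 ∧ y = rho2 σ2 v n2 z} ≤ maximin σ1 := by
    refine le_trans (le_csInf (hZne σ1 n1 n2) ?_) (le_maximin σ1 n1 n2 hn12)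
    rintro y ⟨z, hz1, hz2, rfl⟩
    refine le_trans (csInf_le (zsetFinite σ2 v n2).bddBelow ⟨n1, hn1v, hn12, rfl⟩) ?_
    have e2 : σ2 v n1 = w1 s(n1, v) := by rw [c5 v n1 hvne hn12, S1 v n1, hv1v]
    have e3 : σ2 n2 n1 = σ1 n1 v * w1 s(n1, n2) := by rw [S2 n2 n1, c4 n1 hn12]
    have e5 : σ1 n2 z = σ1 z n1 * w1 s(n1, n2) := by rw [S1 n2 z, c2 z hz2]
    have ht : (σ1 z n1)^2 ≤ (w1 s(n1, v))^2 := by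
      have hd := c3 z hz1 hz2
      have hb := sqLeOne (B1 z v).1
      rw [hd]
      nlinarith [mul_le_mul_of_nonneg_right hb (sq_nonneg (w1 s(n1, v)))]
    calc rho2 σ2 v n2 n1
        = (w1 s(n1,n2) - w1 s(n1,v)*(w1 s(n1,v)*w1 s(n1,n2)))^2 /
          ((1-(w1 s(n1,v))^2)*(1-(w1 s(n1,v)*w1 s(n1,n2))^2)) := by
          unfold rho2; rw [hv2, e2, e3, hv1v]
      _ ≤ (w1 s(n1,n2) - σ1 z n1*(σ1 z n1*w1 s(n1,n2)))^2 /
          ((1-(σ1 z n1)^2)*(1-(σ1 z n1*w1 s(n1,n2))^2)) := myAlgV _ _ _ hwa2 hwb2 ht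
      _ = rho2 σ1 n1 n2 z := by unfold rho2; rw [hv12, S1 n1 z, e5]
  apply maximin_le_of σ2 σ1 h0
  intro a b hab
  by_cases hb2 : b = n2
  · rw [hb2]
    by_cases hav : a = v
    · rw [hav]; exact keyVN2
    · exact keyN2 a (hb2 ▸ hab) hav
  · by_cases ha2 : a = n2
    · rw [ha2]
      have hset : {y : ℝ | ∃ z : V, z ≠ n2 ∧ z ≠ b ∧ y = rho2 σ2 n2 b z}
          = {y : ℝ | ∃ z : V, z ≠ b ∧ z ≠ n2 ∧ y = rho2 σ2 b n2 z} := by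
        ext y
        constructor
        · rintro ⟨z, h1, h2, rfl⟩
          exact ⟨z, h2, h1, rho2Symm σ2 (S2 n2 b) z⟩
        · rintro ⟨z, h1, h2, rfl⟩
          exact ⟨z, h2, h1, (rho2Symm σ2 (S2 n2 b) z).symm⟩
      rw [hset]
      by_cases hbv : b = v
      · rw [hbv]; exact keyVN2
      · exact keyN2 b hb2 hbv
    · exact key a b ha2 hb2 hab
end

section
/- For a weighted tree T = (V,E,W) with |V| = n ≥ 3 and edge weights in (−1,1)∖{0}, the maximin value is attained at an adjacent triple: S(T,W) = max over edges {a,b} ∈ E of min over z ∈ (N(a) ∪ N(b)) ∖ {a,b} of ρ²_{ab|z}, where N(u) denotes the set of neighbors of u in T. In other words, in the max-min solution Alice and Bob may be taken to be adjacent vertices, and Eve's minimizing vertex z may be taken to be a neighbor of a or of b. -/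
open SimpleGraph

section Aux

variable {V : Type*} [DecidableEq V] {G : SimpleGraph V} {w : Sym2 V → ℝ} {σ : V → V → ℝ}

private lemma abs_list_prod_le_one {l : List ℝ} (h : ∀ x ∈ l, |x| ≤ 1) : |l.prod| ≤ 1 := by
  induction l with
  | nil => simp
  | cons a t ih =>
      rw [List.prod_cons, abs_mul]
      have h1 := h a (by simp)
      have h2 := ih (fun x hx => h x (by simp [hx]))
      nlinarith [abs_nonneg a, abs_nonneg t.prod]

private lemma abs_list_prod_lt_one {l : List ℝ} (h : ∀ x ∈ l, |x| < 1) (hne : l ≠ []) :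
    |l.prod| < 1 := by
  cases l with
  | nil => exact absurd rfl hne
  | cons a t =>
      rw [List.prod_cons, abs_mul]
      have h1 := h a (by simp)
      have h2 : |t.prod| ≤ 1 := abs_list_prod_le_one (fun x hx => (h x (by simp [hx])).le)
      nlinarith [abs_nonneg a, abs_nonneg t.prod]

private lemma exists_isPath (hconn : G.Connected) (a b : V) : ∃ p : G.Walk a b, p.IsPath := by
  obtain ⟨q⟩ := hconn.preconnected a b
  exact ⟨q.toPath.1, q.toPath.2⟩

private lemma sigma_self
    (hσ : ∀ u u' : V, ∀ p : G.Walk u u', p.IsPath → σ u u' = (p.edges.map w).prod)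
    (v : V) : σ v v = 1 := by
  simpa using hσ v v Walk.nil Walk.IsPath.nil

private lemma abs_sigma_lt_one
    (hσ : ∀ u u' : V, ∀ p : G.Walk u u', p.IsPath → σ u u' = (p.edges.map w).prod)
    (hw1 : ∀ e ∈ G.edgeSet, |w e| < 1) (hconn : G.Connected)
    {u v : V} (huv : u ≠ v) : |σ u v| < 1 := by
  obtain ⟨p, hp⟩ := exists_isPath hconn u v
  rw [hσ u v p hp]
  have hmem : ∀ x ∈ p.edges.map w, |x| < 1 := by
    intro x hx
    obtain ⟨e, he, rfl⟩ := List.mem_map.1 hx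
    exact hw1 e (p.edges_subset_edgeSet he)
  refine abs_list_prod_lt_one hmem ?_
  cases p with
  | nil => exact absurd rfl huv
  | cons h q => simp

private lemma abs_sigma_le_one
    (hσ : ∀ u u' : V, ∀ p : G.Walk u u', p.IsPath → σ u u' = (p.edges.map w).prod)
    (hw1 : ∀ e ∈ G.edgeSet, |w e| < 1) (hconn : G.Connected)
    (u v : V) : |σ u v| ≤ 1 := by
  rcases eq_or_ne u v with rfl | h
  · simp [sigma_self hσ]
  · exact (abs_sigma_lt_one hσ hw1 hconn h).le

private lemma sq_sigma_lt_one
    (hσ : ∀ u u' : V, ∀ p : G.Walk u u', p.IsPath → σ u u' = (p.edges.map w).prod)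
    (hw1 : ∀ e ∈ G.edgeSet, |w e| < 1) (hconn : G.Connected)
    {u v : V} (huv : u ≠ v) : (σ u v) ^ 2 < 1 := by
  have h := abs_sigma_lt_one hσ hw1 hconn huv
  have h0 := abs_nonneg (σ u v)
  nlinarith [sq_abs (σ u v)]

private lemma sigma_symm
    (hσ : ∀ u u' : V, ∀ p : G.Walk u u', p.IsPath → σ u u' = (p.edges.map w).prod)
    (hconn : G.Connected) (u v : V) : σ u v = σ v u := by
  obtain ⟨p, hp⟩ := exists_isPath hconn u v
  rw [hσ u v p hp, hσ v u p.reverse hp.reverse]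
  rw [Walk.edges_reverse, List.map_reverse, List.prod_reverse]

private lemma sigma_adj
    (hσ : ∀ u u' : V, ∀ p : G.Walk u u', p.IsPath → σ u u' = (p.edges.map w).prod)
    {a b : V} (h : G.Adj a b) : σ a b = w s(a, b) := by
  simpa using hσ a b (SimpleGraph.Path.singleton h).1 (SimpleGraph.Path.singleton h).2

private lemma rho2_comm
    (hσ : ∀ u u' : V, ∀ p : G.Walk u u', p.IsPath → σ u u' = (p.edges.map w).prod)
    (hconn : G.Connected) (a b z : V) : rho2 σ a b z = rho2 σ b a z := by
  rw [rho2, rho2, sigma_symm hσ hconn b a]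
  ring

/-- two step: if `a ~ b`, `a ~ v`, `v ≠ b`, then `σ b v = σ a b * σ a v`. -/
private lemma sigma_two_step
    (hσ : ∀ u u' : V, ∀ p : G.Walk u u', p.IsPath → σ u u' = (p.edges.map w).prod)
    {a b v : V} (hab : G.Adj a b) (hav : G.Adj a v) (hvb : v ≠ b) :
    σ b v = σ a b * σ a v := by
  have hpath : (Walk.cons hab.symm (Walk.cons hav Walk.nil)).IsPath := by
    simp [Walk.isPath_def, hab.ne', hav.ne', hvb.symm, hab.ne, hav.ne]
  have := hσ b v _ hpath
  simp only [Walk.edges_cons, Walk.edges_nil, List.map_cons, List.map_nil, List.prod_cons,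
    List.prod_nil, mul_one] at this
  rw [this, sigma_adj hσ hab, sigma_adj hσ hav,
    show s(b, a) = s(a, b) from Sym2.eq_swap, show s(a, v) = s(a, v) from rfl]

private lemma key_mono {c t t' : ℝ} (hc0 : 0 ≤ c) (hc1 : c < 1)
    (ht0 : 0 ≤ t) (ht1 : t < 1) (ht'0 : 0 ≤ t') (ht'1 : t' < 1) (htt : t ≤ t') :
    c * (1 - t') / (1 - c * t') ≤ c * (1 - t) / (1 - c * t) := by
  have h1 : 0 < 1 - c * t' := by nlinarith
  have h2 : 0 < 1 - c * t := by nlinarith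
  rw [div_le_div_iff₀ h1 h2]
  nlinarith [mul_nonneg (mul_nonneg hc0 (sub_nonneg.2 htt)) (sub_nonneg.2 hc1.le)]

/-- If `σ b z = σ a b * σ a z` (i.e. `z` hangs off the `a`-side), then
`ρ² = σab²(1−σaz²)/(1−σab²σaz²)`. -/
private lemma rho2_formula
    (hσ : ∀ u u' : V, ∀ p : G.Walk u u', p.IsPath → σ u u' = (p.edges.map w).prod)
    (hw1 : ∀ e ∈ G.edgeSet, |w e| < 1) (hconn : G.Connected)
    {a b z : V} (hz : z ≠ a) (hbz : σ b z = σ a b * σ a z) :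
    rho2 σ a b z = σ a b ^ 2 * (1 - σ a z ^ 2) / (1 - σ a b ^ 2 * σ a z ^ 2) := by
  have hs : (σ a z) ^ 2 < 1 := sq_sigma_lt_one hσ hw1 hconn (fun h => hz (h.symm))
  have hne : (1 : ℝ) - σ a z ^ 2 ≠ 0 := by linarith
  rw [rho2, hbz]
  have hnum : (σ a b - σ a z * (σ a b * σ a z)) ^ 2
      = (1 - σ a z ^ 2) * (σ a b ^ 2 * (1 - σ a z ^ 2)) := by ring
  have hden : (1 - σ a z ^ 2) * (1 - (σ a b * σ a z) ^ 2)
      = (1 - σ a z ^ 2) * (1 - σ a b ^ 2 * σ a z ^ 2) := by ring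
  rw [hnum, hden, mul_div_mul_left _ _ hne]

/-- one-sided step: the path from `a` to `z` avoids `b`. -/
private lemma step_a
    (hσ : ∀ u u' : V, ∀ p : G.Walk u u', p.IsPath → σ u u' = (p.edges.map w).prod)
    (hw1 : ∀ e ∈ G.edgeSet, |w e| < 1) (hconn : G.Connected)
    {a b z : V} (hab : G.Adj a b) (hz : z ≠ a) (hzb : z ≠ b)
    (p : G.Walk a z) (hp : p.IsPath) (hbp : b ∉ p.support) :
    ∃ z', z' ≠ a ∧ z' ≠ b ∧ G.Adj a z' ∧ rho2 σ a b z' ≤ rho2 σ a b z := by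
  cases p with
  | nil => exact absurd rfl hz
  | @cons _ v _ h q =>
    obtain ⟨hq, haq⟩ := (Walk.cons_isPath_iff h q).1 hp
    have hva : v ≠ a := h.ne'
    have hvb : v ≠ b := by
      intro e
      exact hbp (by rw [Walk.support_cons]; exact List.mem_cons_of_mem _ (e ▸ q.start_mem_support))
    have hbq : b ∉ q.support := fun hb =>
      hbp (by rw [Walk.support_cons]; exact List.mem_cons_of_mem _ hb)
    -- σ relations
    have hsaz : σ a z = σ a v * σ v z := by
      rw [hσ a z (Walk.cons h q) ((Walk.cons_isPath_iff h q).2 ⟨hq, haq⟩), hσ v z q hq,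
        sigma_adj hσ h]
      simp [Walk.edges_cons]
    have hsbz : σ b z = σ a b * σ a z := by
      have hpath : (Walk.cons hab.symm (Walk.cons h q)).IsPath := by
        refine (Walk.cons_isPath_iff hab.symm (Walk.cons h q)).2
          ⟨(Walk.cons_isPath_iff h q).2 ⟨hq, haq⟩, ?_⟩
        intro hmem
        rw [Walk.support_cons, List.mem_cons] at hmem
        rcases hmem with h' | h'
        · exact hab.ne' h'
        · exact hbq h'
      have := hσ b z _ hpath
      rw [Walk.edges_cons, List.map_cons, List.prod_cons] at this
      rw [this, ← hσ a z (Walk.cons h q) ((Walk.cons_isPath_iff h q).2 ⟨hq, haq⟩),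
        sigma_adj hσ hab, show s(b, a) = s(a, b) from Sym2.eq_swap]
    have hsbv : σ b v = σ a b * σ a v := sigma_two_step hσ hab h hvb
    refine ⟨v, hva, hvb, h, ?_⟩
    rw [rho2_formula hσ hw1 hconn hz hsbz, rho2_formula hσ hw1 hconn hva hsbv]
    have hcab : σ a b ^ 2 < 1 := sq_sigma_lt_one hσ hw1 hconn hab.ne
    have htz : σ a z ^ 2 < 1 := sq_sigma_lt_one hσ hw1 hconn (fun e => hz e.symm)
    have htv : σ a v ^ 2 < 1 := sq_sigma_lt_one hσ hw1 hconn (fun e => hva e.symm)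
    have hle : σ a z ^ 2 ≤ σ a v ^ 2 := by
      have h1 : |σ v z| ≤ 1 := abs_sigma_le_one hσ hw1 hconn v z
      have h2 : (σ v z) ^ 2 ≤ 1 := by nlinarith [sq_abs (σ v z), abs_nonneg (σ v z)]
      calc σ a z ^ 2 = σ a v ^ 2 * σ v z ^ 2 := by rw [hsaz]; ring
        _ ≤ σ a v ^ 2 * 1 := by nlinarith [sq_nonneg (σ a v)]
        _ = σ a v ^ 2 := by ring
    exact key_mono (sq_nonneg _) hcab (sq_nonneg _) htz (sq_nonneg _) htv hle

/-- main reduction step: for adjacent `a b` and any admissible `z`, there is an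
admissible neighbour `z'` with a smaller `ρ²`. -/
private lemma step
    (hσ : ∀ u u' : V, ∀ p : G.Walk u u', p.IsPath → σ u u' = (p.edges.map w).prod)
    (hw1 : ∀ e ∈ G.edgeSet, |w e| < 1) (hconn : G.Connected)
    {a b z : V} (hab : G.Adj a b) (hz : z ≠ a) (hzb : z ≠ b) :
    ∃ z', z' ≠ a ∧ z' ≠ b ∧ (G.Adj a z' ∨ G.Adj b z') ∧
      rho2 σ a b z' ≤ rho2 σ a b z := by
  obtain ⟨p, hp⟩ := exists_isPath hconn a z
  by_cases hb : b ∈ p.support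
  · -- pass to the walk from b to z, which avoids a
    have hq : (p.dropUntil b hb).IsPath := hp.dropUntil hb
    have haq : a ∉ (p.dropUntil b hb).support := by
      intro ha
      have hnd := hp.support_nodup
      rw [← p.take_spec hb, Walk.support_append] at hnd
      have hdisj := List.disjoint_of_nodup_append hnd
      have ha1 : a ∈ (p.takeUntil b hb).support := Walk.start_mem_support _
      have ha2 : a ∈ (p.dropUntil b hb).support.tail := by
        rw [Walk.support_eq_cons (p.dropUntil b hb), List.mem_cons] at ha
        rcases ha with h' | h'
        · exact absurd h'.symm hab.ne'
        · exact h'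
      exact hdisj ha1 ha2
    obtain ⟨z', h1, h2, h3, h4⟩ :=
      step_a hσ hw1 hconn hab.symm hzb hz (p.dropUntil b hb) hq haq
    refine ⟨z', h2, h1, Or.inr h3, ?_⟩
    rw [rho2_comm hσ hconn a b z', rho2_comm hσ hconn a b z]
    exact h4
  · obtain ⟨z', h1, h2, h3, h4⟩ := step_a hσ hw1 hconn hab hz hzb p hp hb
    exact ⟨z', h1, h2, Or.inl h3, h4⟩

private lemma rho2_nonneg
    (hσ : ∀ u u' : V, ∀ p : G.Walk u u', p.IsPath → σ u u' = (p.edges.map w).prod)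
    (hw1 : ∀ e ∈ G.edgeSet, |w e| < 1) (hconn : G.Connected)
    {a b z : V} (hz : z ≠ a) (hzb : z ≠ b) : 0 ≤ rho2 σ a b z := by
  have h1 : (σ a z) ^ 2 < 1 := sq_sigma_lt_one hσ hw1 hconn (fun e => hz e.symm)
  have h2 : (σ b z) ^ 2 < 1 := sq_sigma_lt_one hσ hw1 hconn (fun e => hzb e.symm)
  exact div_nonneg (sq_nonneg _) (mul_nonneg (by linarith) (by linarith))

private lemma rho2_nbr_le_one
    (hσ : ∀ u u' : V, ∀ p : G.Walk u u', p.IsPath → σ u u' = (p.edges.map w).prod)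
    (hw1 : ∀ e ∈ G.edgeSet, |w e| < 1) (hconn : G.Connected)
    {a b z : V} (hab : G.Adj a b) (hz : z ≠ a) (hzb : z ≠ b)
    (h : G.Adj a z ∨ G.Adj b z) : rho2 σ a b z ≤ 1 := by
  have main : ∀ a' b' z' : V, G.Adj a' b' → z' ≠ b' → G.Adj a' z' →
      rho2 σ a' b' z' ≤ 1 := by
    intro a' b' z' hab' hzb' haz'
    have hsbz : σ b' z' = σ a' b' * σ a' z' := sigma_two_step hσ hab' haz' hzb'
    rw [rho2_formula hσ hw1 hconn haz'.ne' hsbz]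
    have hc : σ a' b' ^ 2 < 1 := sq_sigma_lt_one hσ hw1 hconn hab'.ne
    have ht : σ a' z' ^ 2 < 1 := sq_sigma_lt_one hσ hw1 hconn haz'.ne
    have hden : 0 < 1 - σ a' b' ^ 2 * σ a' z' ^ 2 := by
      nlinarith [sq_nonneg (σ a' b'), sq_nonneg (σ a' z')]
    rw [div_le_one hden]
    nlinarith [sq_nonneg (σ a' b'), sq_nonneg (σ a' z')]
  rcases h with h | h
  · exact main a b z hab hzb h
  · rw [rho2_comm hσ hconn a b z]
    exact main b a z hab.symm hz h

private lemma exists_third {V : Type*} [Fintype V] [DecidableEq V]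
    (hcard : 3 ≤ Fintype.card V) (a b : V) : ∃ c : V, c ≠ a ∧ c ≠ b := by
  by_contra h
  push_neg at h
  have hsub : (Finset.univ : Finset V) ⊆ {a, b} := by
    intro c _
    rcases eq_or_ne c a with rfl | h'
    · simp
    · simp [h c h']
  have h1 := Finset.card_le_card hsub
  have h2 : ({a, b} : Finset V).card ≤ 2 :=
    (Finset.card_insert_le a {b}).trans (by simp)
  rw [Finset.card_univ] at h1
  omega

private lemma exists_nbr {V : Type*} [Fintype V] [DecidableEq V] {G : SimpleGraph V}
    (hconn : G.Connected) (hcard : 3 ≤ Fintype.card V)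
    {a b : V} (hab : G.Adj a b) :
    ∃ z : V, z ≠ a ∧ z ≠ b ∧ (G.Adj a z ∨ G.Adj b z) := by
  obtain ⟨c, hca, hcb⟩ := exists_third hcard a b
  obtain ⟨p, hp⟩ := exists_isPath hconn a c
  cases p with
  | nil => exact absurd rfl hca
  | @cons _ v _ h q =>
    obtain ⟨hq, haq⟩ := (Walk.cons_isPath_iff h q).1 hp
    by_cases hvb : v = b
    · subst hvb
      cases q with
      | nil => exact absurd rfl hcb
      | @cons _ u _ h2 r =>
        have hu : u ∈ (Walk.cons h2 r).support := by
          rw [Walk.support_cons]; exact List.mem_cons_of_mem _ r.start_mem_support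
        exact ⟨u, fun e => haq (e ▸ hu), h2.ne', Or.inr h2⟩
    · exact ⟨v, h.ne', hvb, Or.inl h⟩

end Aux

/-- For a weighted tree `T = (V,E,W)` with `|V| = n ≥ 3` and edge weights
in `(−1,1)∖{0}` (covariances `σ u u'` given by products of edge weights along unique
paths, `σ u u = 1`), the maximin value is attained at an adjacent triple:
`S(T,W) = max_{{a,b}∈E} min_{z ∈ (N(a)∪N(b))∖{a,b}} ρ²_{ab|z}`. -/
theorem stmt_9 {V : Type*} [Fintype V] [DecidableEq V] (hcard : 3 ≤ Fintype.card V)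
    (G : SimpleGraph V) (hT : G.IsTree)
    (w : Sym2 V → ℝ)
    (hw : ∀ e ∈ G.edgeSet, w e ∈ Set.Ioo (-1 : ℝ) 1 ∧ w e ≠ 0)
    (σ : V → V → ℝ)
    (hσ : ∀ u u' : V, ∀ p : G.Walk u u', p.IsPath → σ u u' = (p.edges.map w).prod) :
    maximin σ =
      sSup {x : ℝ | ∃ a b : V, G.Adj a b ∧
        x = sInf {y : ℝ | ∃ z : V, z ≠ a ∧ z ≠ b ∧ (G.Adj a z ∨ G.Adj b z) ∧
          y = rho2 σ a b z}} := by
  have hconn : G.Connected := hT.isConnected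
  have hw1 : ∀ e ∈ G.edgeSet, |w e| < 1 := fun e he =>
    abs_lt.2 ⟨(hw e he).1.1, (hw e he).1.2⟩
  set A : V → V → Set ℝ :=
    fun a b => {y : ℝ | ∃ z : V, z ≠ a ∧ z ≠ b ∧ y = rho2 σ a b z} with hA
  set B : V → V → Set ℝ :=
    fun a b => {y : ℝ | ∃ z : V, z ≠ a ∧ z ≠ b ∧ (G.Adj a z ∨ G.Adj b z) ∧
      y = rho2 σ a b z} with hB
  -- basic facts valid for any a ≠ b
  have hAbdd : ∀ a b : V, a ≠ b → BddBelow (A a b) := by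
    intro a b _
    exact ⟨0, fun y hy => by
      obtain ⟨z, h1, h2, rfl⟩ := hy
      exact rho2_nonneg hσ hw1 hconn h1 h2⟩
  have hAne : ∀ a b : V, a ≠ b → (A a b).Nonempty := by
    intro a b _
    obtain ⟨c, hca, hcb⟩ := exists_third hcard a b
    exact ⟨rho2 σ a b c, c, hca, hcb, rfl⟩
  -- facts for adjacent a b
  have hBA : ∀ a b : V, B a b ⊆ A a b := by
    intro a b y hy
    obtain ⟨z, h1, h2, _, rfl⟩ := hy
    exact ⟨z, h1, h2, rfl⟩
  have hBbdd : ∀ a b : V, a ≠ b → BddBelow (B a b) := by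
    intro a b hab
    exact (hAbdd a b hab).mono (hBA a b)
  have hBne : ∀ a b : V, G.Adj a b → (B a b).Nonempty := by
    intro a b hab
    obtain ⟨z, h1, h2, h3⟩ := exists_nbr hconn hcard hab
    exact ⟨rho2 σ a b z, z, h1, h2, h3, rfl⟩
  have hInfEq : ∀ a b : V, G.Adj a b → sInf (A a b) = sInf (B a b) := by
    intro a b hab
    refine le_antisymm (csInf_le_csInf (hAbdd a b hab.ne) (hBne a b hab) (hBA a b)) ?_
    refine le_csInf (hAne a b hab.ne) ?_
    rintro y ⟨z, h1, h2, rfl⟩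
    obtain ⟨z', h1', h2', h3', h4'⟩ := step hσ hw1 hconn hab h1 h2
    exact le_trans (csInf_le (hBbdd a b hab.ne) ⟨z', h1', h2', h3', rfl⟩) h4'
  have hBInf_nonneg : ∀ a b : V, G.Adj a b → 0 ≤ sInf (B a b) := by
    intro a b hab
    refine le_csInf (hBne a b hab) ?_
    rintro y ⟨z, h1, h2, _, rfl⟩
    exact rho2_nonneg hσ hw1 hconn h1 h2
  have hBInf_le_one : ∀ a b : V, G.Adj a b → sInf (B a b) ≤ 1 := by
    intro a b hab
    obtain ⟨z, h1, h2, h3⟩ := exists_nbr hconn hcard hab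
    exact le_trans (csInf_le (hBbdd a b hab.ne) ⟨z, h1, h2, h3, rfl⟩)
      (rho2_nbr_le_one hσ hw1 hconn hab h1 h2 h3)
  -- for non-adjacent pairs the inner inf is ≤ 0
  have hNonadj : ∀ a b : V, a ≠ b → ¬ G.Adj a b → sInf (A a b) ≤ 0 := by
    intro a b hab hnadj
    obtain ⟨p, hp⟩ := exists_isPath hconn a b
    have h0 : (0 : ℝ) ∈ A a b := by
      cases p with
      | nil => exact absurd rfl hab
      | @cons _ v _ h q =>
        rw [Walk.cons_isPath_iff] at hp
        obtain ⟨hq, haq⟩ := hp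
        have hvb : v ≠ b := by
          intro e
          exact hnadj (e ▸ h)
        have hσab : σ a b = σ a v * σ v b := by
          rw [hσ a b (Walk.cons h q) ((Walk.cons_isPath_iff h q).2 ⟨hq, haq⟩), hσ v b q hq,
            sigma_adj hσ h]
          simp [Walk.edges_cons]
        refine ⟨v, h.ne', hvb, ?_⟩
        have hnum : σ a b - σ a v * σ b v = 0 := by
          rw [hσab, sigma_symm hσ hconn b v]; ring
        rw [rho2, hnum]
        simp
    exact csInf_le (hAbdd a b hab) h0
  -- the two outer sets
  set L : Set ℝ := {x : ℝ | ∃ a b : V, a ≠ b ∧ x = sInf (A a b)} with hL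
  set R : Set ℝ := {x : ℝ | ∃ a b : V, G.Adj a b ∧ x = sInf (B a b)} with hR
  have hRL : R ⊆ L := by
    rintro x ⟨a, b, hab, rfl⟩
    exact ⟨a, b, hab.ne, (hInfEq a b hab).symm⟩
  have hRne : R.Nonempty := by
    have : Nontrivial V := Fintype.one_lt_card_iff_nontrivial.1 (by omega)
    obtain ⟨a, b, hab⟩ := exists_pair_ne V
    obtain ⟨p, hp⟩ := exists_isPath hconn a b
    cases p with
    | nil => exact absurd rfl hab
    | @cons _ v _ h q => exact ⟨sInf (B a v), a, v, h, rfl⟩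
  have hLbdd : BddAbove L := by
    refine ⟨1, ?_⟩
    rintro x ⟨a, b, hab, rfl⟩
    by_cases hadj : G.Adj a b
    · rw [hInfEq a b hadj]
      exact hBInf_le_one a b hadj
    · exact le_trans (hNonadj a b hab hadj) zero_le_one
  have hRbdd : BddAbove R := by
    refine ⟨1, ?_⟩
    rintro x ⟨a, b, hab, rfl⟩
    exact hBInf_le_one a b hab
  have hsupR_nonneg : 0 ≤ sSup R := by
    obtain ⟨x, hx⟩ := hRne
    obtain ⟨a, b, hab, rfl⟩ := hx
    exact le_trans (hBInf_nonneg a b hab) (le_csSup hRbdd ⟨a, b, hab, rfl⟩)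
  have hmain : sSup L = sSup R := by
    refine le_antisymm ?_ (csSup_le_csSup hLbdd hRne hRL)
    refine Real.sSup_le ?_ hsupR_nonneg
    rintro x ⟨a, b, hab, rfl⟩
    by_cases hadj : G.Adj a b
    · rw [hInfEq a b hadj]
      exact le_csSup hRbdd ⟨a, b, hadj, rfl⟩
    · exact le_trans (hNonadj a b hab hadj) hsupR_nonneg
  exact hmain
end

section
/- Let T be a finite tree with |V| ≥ 4 vertices and let α(T) denote the number of leaf edges of T whose non-leaf endpoint has degree exactly 2 (equivalently, for |V| ≥ 4, the number of leaf edges with no leaf siblings that are eligible for grafting). Then: (i) T admits a grafting operation if and only if α(T) > 0; in particular α(T) = 0 if and only if T is a least favorable (LF) structure; (ii) every grafting operation strictly decreases α; consequently, starting from T, an LF structure is reached after at most α(T) grafting operations. -/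
open SimpleGraph

/-- `Grafts G G'` : `G'` is obtained from `G` by one grafting operation. -/
def Grafts {V : Type*} (G G' : SimpleGraph V) : Prop :=
  ∃ n1 n2 v : V, G.Adj n1 n2 ∧ (G.neighborSet n2).ncard = 1 ∧
    (G.neighborSet n1).ncard = 2 ∧ G.Adj n1 v ∧ v ≠ n2 ∧
    G' = G.deleteEdges {s(n1, n2)} ⊔ fromEdgeSet {s(v, n2)}

/-- `alphaCount G` : the number of leaf edges of `G` whose non-leaf endpoint has degree
exactly 2 (the leaf edges eligible for grafting). -/
noncomputable def alphaCount {V : Type*} (G : SimpleGraph V) : ℕ :=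
  {e : Sym2 V | e ∈ G.edgeSet ∧ ∃ a b : V, e = s(a, b) ∧
    (G.neighborSet a).ncard = 1 ∧ (G.neighborSet b).ncard = 2}.ncard

section Aux

variable {V : Type*}

private lemma walk_closed {G : SimpleGraph V} {S : Set V}
    (hS : ∀ x ∈ S, G.neighborSet x ⊆ S) {a b : V} (p : G.Walk a b) (ha : a ∈ S) : b ∈ S := by
  induction p with
  | nil => exact ha
  | cons h _ ih => exact ih (hS _ ha h)

private lemma walk_reach {G H : SimpleGraph V} (hr : ∀ x y, G.Adj x y → H.Reachable x y)
    {a b : V} (p : G.Walk a b) : H.Reachable a b := by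
  induction p with
  | nil => exact Reachable.refl _
  | cons h _ ih => exact (hr _ _ h).trans ih

private lemma neighborSet_leaf {G : SimpleGraph V} {n1 n2 : V} (h12 : G.Adj n1 n2)
    (h2 : (G.neighborSet n2).ncard = 1) : G.neighborSet n2 = {n1} := by
  obtain ⟨a, ha⟩ := Set.ncard_eq_one.mp h2
  have h : n1 ∈ G.neighborSet n2 := h12.symm
  rw [ha] at h ⊢
  rw [Set.mem_singleton_iff] at h
  rw [h]

private lemma neighborSet_deg2 [Fintype V] {G : SimpleGraph V} {n1 n2 v : V} (h12 : G.Adj n1 n2)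
    (h1 : (G.neighborSet n1).ncard = 2) (h1v : G.Adj n1 v) (hvne : v ≠ n2) :
    G.neighborSet n1 = {n2, v} := by
  have hsub : ({n2, v} : Set V) ⊆ G.neighborSet n1 := by
    intro x hx
    rcases hx with rfl | hx
    · exact h12
    · rw [Set.mem_singleton_iff] at hx; subst hx; exact h1v
  refine (Set.eq_of_subset_of_ncard_le hsub ?_ (Set.toFinite _)).symm
  rw [h1, Set.ncard_pair (fun h => hvne h.symm)]

private lemma two_le_deg_v [Fintype V] (hcard : 4 ≤ Fintype.card V) {G : SimpleGraph V}
    (hc : G.Connected) {n1 n2 v : V} (hN1 : G.neighborSet n1 = {n2, v})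
    (hN2 : G.neighborSet n2 = {n1}) (h1v : G.Adj n1 v) :
    2 ≤ (G.neighborSet v).ncard := by
  by_contra h
  push_neg at h
  have hpos : 0 < (G.neighborSet v).ncard := by
    rw [Set.ncard_pos (Set.toFinite _)]
    exact ⟨n1, h1v.symm⟩
  have h1 : (G.neighborSet v).ncard = 1 := le_antisymm (by omega) hpos
  have hNv : G.neighborSet v = {n1} := neighborSet_leaf h1v h1
  have hclosed : ∀ x ∈ ({n1, n2, v} : Set V), G.neighborSet x ⊆ ({n1, n2, v} : Set V) := by
    intro x hx
    simp only [Set.mem_insert_iff, Set.mem_singleton_iff] at hx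
    rcases hx with rfl | rfl | rfl
    · rw [hN1]; intro y hy
      simp only [Set.mem_insert_iff, Set.mem_singleton_iff] at hy ⊢
      tauto
    · rw [hN2]; intro y hy
      simp only [Set.mem_singleton_iff] at hy
      simp only [Set.mem_insert_iff, Set.mem_singleton_iff]
      tauto
    · rw [hNv]; intro y hy
      simp only [Set.mem_singleton_iff] at hy
      simp only [Set.mem_insert_iff, Set.mem_singleton_iff]
      tauto
  have hall : ∀ w : V, w ∈ ({n1, n2, v} : Set V) := by
    intro w
    exact (hc.preconnected n1 w).elim fun p => walk_closed hclosed p (Or.inl rfl)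
  have hle : (Set.univ : Set V).ncard ≤ ({n1, n2, v} : Set V).ncard :=
    Set.ncard_le_ncard (fun x _ => hall x) (Set.toFinite _)
  rw [Set.ncard_univ, Nat.card_eq_fintype_card] at hle
  have h3 : ({n1, n2, v} : Set V).ncard ≤ 3 := by
    have i1 := Set.ncard_insert_le n1 ({n2, v} : Set V)
    have i2 := Set.ncard_insert_le n2 ({v} : Set V)
    have i3 : ({v} : Set V).ncard = 1 := Set.ncard_singleton v
    omega
  omega

private lemma grafts_key [Fintype V] (hcard : 4 ≤ Fintype.card V) {G G' : SimpleGraph V}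
    (hc : G.Connected) (hg : Grafts G G') :
    alphaCount G' < alphaCount G ∧ G'.Connected := by
  obtain ⟨n1, n2, v, h12, h2, h1, h1v, hvne, rfl⟩ := hg
  set H := G.deleteEdges {s(n1, n2)} ⊔ fromEdgeSet {s(v, n2)} with hHdef
  have hN2 := neighborSet_leaf h12 h2
  have hN1 := neighborSet_deg2 h12 h1 h1v hvne
  have hdegv := two_le_deg_v hcard hc hN1 hN2 h1v
  have hn12 : n1 ≠ n2 := h12.ne
  have hn1v : n1 ≠ v := h1v.ne
  have hvn1 : v ≠ n1 := hn1v.symm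
  have hn2v : n2 ≠ v := fun h => hvne h.symm
  have hn21 : n2 ≠ n1 := hn12.symm
  have hvn2adj : ¬ G.Adj v n2 := by
    intro h
    have hmem : v ∈ G.neighborSet n2 := h.symm
    rw [hN2, Set.mem_singleton_iff] at hmem
    exact hvn1 hmem
  have hadj : ∀ x y, H.Adj x y ↔
      (G.Adj x y ∧ ¬ s(x, y) = s(n1, n2)) ∨ (s(x, y) = s(v, n2) ∧ x ≠ y) := by
    intro x y
    simp [hHdef, sup_adj, deleteEdges_adj, fromEdgeSet_adj, Set.mem_singleton_iff]
  have hAdj1 : ∀ y, G.Adj n1 y ↔ (y = n2 ∨ y = v) := by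
    intro y
    rw [← mem_neighborSet, hN1]
    simp [Set.mem_insert_iff, Set.mem_singleton_iff]
  have hAdj2 : ∀ y, G.Adj n2 y ↔ y = n1 := by
    intro y
    rw [← mem_neighborSet, hN2]
    simp [Set.mem_singleton_iff]
  -- neighbor sets of H
  have hHn1 : H.neighborSet n1 = {v} := by
    ext y
    simp only [mem_neighborSet, hadj, Sym2.eq_iff, Set.mem_singleton_iff, hAdj1]
    constructor
    · rintro (⟨h, hne⟩ | ⟨h, hne⟩) <;> tauto
    · rintro rfl
      exact Or.inl ⟨Or.inr rfl, by tauto⟩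
  have hHn2 : H.neighborSet n2 = {v} := by
    ext y
    simp only [mem_neighborSet, hadj, Sym2.eq_iff, Set.mem_singleton_iff, hAdj2]
    constructor
    · rintro (⟨h, hne⟩ | ⟨h, hne⟩) <;> tauto
    · rintro rfl
      exact Or.inr ⟨by tauto, hn2v⟩
  have hHv : H.neighborSet v = insert n2 (G.neighborSet v) := by
    ext y
    simp only [mem_neighborSet, hadj, Sym2.eq_iff, Set.mem_insert_iff, mem_neighborSet]
    constructor
    · rintro (⟨h, hne⟩ | ⟨h, hne⟩) <;> tauto
    · rintro (rfl | h)
      · exact Or.inr ⟨by tauto, hvne⟩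
      · exact Or.inl ⟨h, by rintro (⟨rfl, rfl⟩ | ⟨rfl, rfl⟩) <;> tauto⟩
  have hHother : ∀ x, x ≠ n1 → x ≠ n2 → x ≠ v → H.neighborSet x = G.neighborSet x := by
    intro x hx1 hx2 hxv
    ext y
    simp only [mem_neighborSet, hadj, Sym2.eq_iff]
    constructor
    · rintro (⟨h, hne⟩ | ⟨h, hne⟩) <;> tauto
    · intro h
      refine Or.inl ⟨h, ?_⟩
      rintro (⟨rfl, rfl⟩ | ⟨rfl, rfl⟩) <;> tauto
  have hcn1 : (H.neighborSet n1).ncard = 1 := by rw [hHn1]; exact Set.ncard_singleton v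
  have hcn2 : (H.neighborSet n2).ncard = 1 := by rw [hHn2]; exact Set.ncard_singleton v
  have hn2nv : n2 ∉ G.neighborSet v := fun h => hvn2adj h
  have hcv : 3 ≤ (H.neighborSet v).ncard := by
    rw [hHv, Set.ncard_insert_of_notMem hn2nv (Set.toFinite _)]
    omega
  -- the alpha sets
  have hsub : {e : Sym2 V | e ∈ H.edgeSet ∧ ∃ a b : V, e = s(a, b) ∧
      (H.neighborSet a).ncard = 1 ∧ (H.neighborSet b).ncard = 2} ⊆
      {e : Sym2 V | e ∈ G.edgeSet ∧ ∃ a b : V, e = s(a, b) ∧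
      (G.neighborSet a).ncard = 1 ∧ (G.neighborSet b).ncard = 2} \ {s(n1, n2)} := by
    rintro e ⟨heE, a, b, rfl, hda, hdb⟩
    rw [mem_edgeSet, hadj] at heE
    rcases heE with ⟨hGab, hne⟩ | ⟨heq, hne⟩
    · -- a, b avoid n1 and v
      have hbv : b ≠ v := by
        rintro rfl
        rw [hdb] at hcv
        omega
      have hav : a ≠ v := by
        rintro rfl
        rw [hda] at hcv
        omega
      have hbn1 : b ≠ n1 := by
        rintro rfl
        rw [hcn1] at hdb
        omega
      have han1 : a ≠ n1 := by
        rintro rfl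
        rcases (hAdj1 b).mp hGab with rfl | rfl
        · exact hne (by rfl)
        · exact hbv rfl
      have hGa : (G.neighborSet a).ncard = 1 := by
        by_cases ha2 : a = n2
        · subst ha2; exact h2
        · rw [← hHother a han1 ha2 hav]; exact hda
      have hGb : (G.neighborSet b).ncard = 2 := by
        by_cases hb2 : b = n2
        · subst hb2
          rw [hcn2] at hdb
          omega
        · rw [← hHother b hbn1 hb2 hbv]; exact hdb
      exact ⟨⟨(G.mem_edgeSet).mpr hGab, a, b, rfl, hGa, hGb⟩, hne⟩
    · exfalso
      rw [Sym2.eq_iff] at heq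
      rcases heq with ⟨rfl, rfl⟩ | ⟨rfl, rfl⟩
      · rw [hda] at hcv; omega
      · rw [hdb] at hcv; omega
  have hmem : s(n1, n2) ∈ {e : Sym2 V | e ∈ G.edgeSet ∧ ∃ a b : V, e = s(a, b) ∧
      (G.neighborSet a).ncard = 1 ∧ (G.neighborSet b).ncard = 2} :=
    ⟨(G.mem_edgeSet).mpr h12, n2, n1, Sym2.eq_swap.symm, h2, h1⟩
  constructor
  · calc alphaCount H ≤ ({e : Sym2 V | e ∈ G.edgeSet ∧ ∃ a b : V, e = s(a, b) ∧
          (G.neighborSet a).ncard = 1 ∧ (G.neighborSet b).ncard = 2} \ {s(n1, n2)}).ncard :=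
            Set.ncard_le_ncard hsub (Set.toFinite _)
      _ < alphaCount G := Set.ncard_diff_singleton_lt_of_mem hmem (Set.toFinite _)
  · -- connectivity
    have hreach : ∀ x y, G.Adj x y → H.Reachable x y := by
      intro x y hxy
      by_cases hcase : s(x, y) = s(n1, n2)
      · have hr : H.Reachable n1 n2 := by
          have e1 : H.Adj n1 v := by
            rw [hadj]
            exact Or.inl ⟨h1v, by rw [Sym2.eq_iff]; tauto⟩
          have e2 : H.Adj v n2 := by
            rw [hadj]
            exact Or.inr ⟨rfl, hvne⟩
          exact e1.reachable.trans e2.reachable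
        rw [Sym2.eq_iff] at hcase
        rcases hcase with ⟨rfl, rfl⟩ | ⟨rfl, rfl⟩
        · exact hr
        · exact hr.symm
      · exact (Adj.reachable (by rw [hadj]; exact Or.inl ⟨hxy, hcase⟩))
    haveI := hc.nonempty
    exact ⟨fun x y => (hc.preconnected x y).elim fun p => walk_reach hreach p⟩

private lemma exists_grafts_iff [Fintype V] {G : SimpleGraph V} :
    (∃ G', Grafts G G') ↔ 0 < alphaCount G := by
  constructor
  · rintro ⟨G', n1, n2, v, h12, h2, h1, h1v, hvne, rfl⟩
    rw [alphaCount, Set.ncard_pos (Set.toFinite _)]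
    exact ⟨s(n1, n2), (G.mem_edgeSet).mpr h12, n2, n1, Sym2.eq_swap.symm, h2, h1⟩
  · intro h
    rw [alphaCount, Set.ncard_pos (Set.toFinite _)] at h
    obtain ⟨e, heE, a, b, rfl, hda, hdb⟩ := h
    have hab : G.Adj a b := (G.mem_edgeSet).mp heE
    obtain ⟨x, y, hxy, hNb⟩ := Set.ncard_eq_two.mp hdb
    have haNb : a ∈ G.neighborSet b := hab.symm
    have hxNb : x ∈ G.neighborSet b := by rw [hNb]; exact Or.inl rfl
    have hyNb : y ∈ G.neighborSet b := by rw [hNb]; exact Or.inr rfl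
    rw [hNb] at haNb
    simp only [Set.mem_insert_iff, Set.mem_singleton_iff] at haNb
    rcases haNb with rfl | rfl
    · exact ⟨_, b, a, y, hab.symm, hda, hdb, hyNb, fun h => hxy h.symm, rfl⟩
    · exact ⟨_, b, a, x, hab.symm, hda, hdb, hxNb, fun h => hxy h, rfl⟩

private lemma reach_lf [Fintype V] (hcard : 4 ≤ Fintype.card V) :
    ∀ n (G : SimpleGraph V), alphaCount G ≤ n → G.Connected →
    ∃ (k : ℕ) (f : ℕ → SimpleGraph V), k ≤ alphaCount G ∧ f 0 = G ∧
      (∀ i < k, Grafts (f i) (f (i + 1))) ∧ ¬ ∃ G', Grafts (f k) G' := by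
  intro n
  induction n with
  | zero =>
    intro G hG _
    refine ⟨0, fun _ => G, Nat.zero_le _, rfl, fun i hi => absurd hi (by omega), ?_⟩
    show ¬ ∃ G', Grafts G G'
    rw [exists_grafts_iff]
    omega
  | succ n ih =>
    intro G hG hc
    by_cases h : ∃ G', Grafts G G'
    · obtain ⟨G', hg⟩ := h
      obtain ⟨hlt, hc'⟩ := grafts_key hcard hc hg
      obtain ⟨k, f, hk, hf0, hstep, hlf⟩ := ih G' (by omega) hc'
      refine ⟨k + 1, fun i => if i = 0 then G else f (i - 1), by omega, by simp, ?_, ?_⟩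
      · intro i hi
        rcases Nat.eq_zero_or_pos i with rfl | hpos
        · simpa [hf0] using hg
        · have h1 : ¬ i = 0 := by omega
          have h2 : ¬ i + 1 = 0 := by omega
          simp only [h1, h2, if_false]
          have hs := hstep (i - 1) (by omega)
          have he : i - 1 + 1 = i := by omega
          rw [he] at hs
          simpa [he] using hs
      · simp only [Nat.add_sub_cancel, Nat.succ_ne_zero, if_false]
        exact hlf
    · exact ⟨0, fun _ => G, Nat.zero_le _, rfl, fun i hi => absurd hi (by omega), h⟩

end Aux

/-- For a finite tree `T` with `|V| ≥ 4`:
(i) `T` admits a grafting operation iff `α(T) > 0` (so `α(T) = 0` iff `T` is LF);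
(ii) every grafting operation strictly decreases `α`;
consequently an LF structure is reached from `T` after at most `α(T)` graftings. -/
theorem stmt_11 {V : Type*} [Fintype V] (hcard : 4 ≤ Fintype.card V)
    (T : SimpleGraph V) (hT : T.IsTree) :
    ((∃ T', Grafts T T') ↔ 0 < alphaCount T) ∧
      ((alphaCount T = 0) ↔ ¬ ∃ T', Grafts T T') ∧
      (∀ T' : SimpleGraph V, Grafts T T' → alphaCount T' < alphaCount T) ∧
      (∃ (k : ℕ) (f : ℕ → SimpleGraph V), k ≤ alphaCount T ∧ f 0 = T ∧
        (∀ i < k, Grafts (f i) (f (i + 1))) ∧ ¬ ∃ T', Grafts (f k) T') := by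
  refine ⟨exists_grafts_iff, ?_, ?_, ?_⟩
  · rw [exists_grafts_iff]
    omega
  · intro T' hg
    exact (grafts_key hcard hT.isConnected hg).1
  · exact reach_lf hcard (alphaCount T) T le_rfl hT.isConnected
end

section
/- Let T = (V,E) be a finite tree with |V| ≥ 4 and at least one internal edge, i.e., |I| ≥ 1 where |I| is the number of internal edges of T. Write the Tutte-like polynomial f(T;t,z) as a polynomial in t with coefficients in ℤ[z]. Then the coefficient of t^{|E|−1} equals α·(1+z)^{|I|−1} + β·(1+z)^{|I|}, where α is the number of leaf edges of T whose non-leaf endpoint has degree exactly 2 (the leaf edges with no leaf siblings that are eligible for grafting) and β is the number of leaf edges of T whose non-leaf endpoint has degree at least 3. -/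
open SimpleGraph

/-- `IsSubtree G F`: the finite edge set `F` consists of edges of `G` and its
edge-induced subgraph is connected. -/
def IsSubtree {V : Type*} (G : SimpleGraph V) (F : Finset (Sym2 V)) : Prop :=
  (F : Set (Sym2 V)) ⊆ G.edgeSet ∧
    ∀ u v : V, u ∈ (fromEdgeSet (F : Set (Sym2 V))).support →
      v ∈ (fromEdgeSet (F : Set (Sym2 V))).support →
      (fromEdgeSet (F : Set (Sym2 V))).Reachable u v

/-- `leafCount F`: the number of leaf edges of the edge set `F`, i.e. edges of `F`
incident to a vertex of degree 1 in the subgraph formed by `F`. -/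
noncomputable def leafCount {V : Type*} (F : Finset (Sym2 V)) : ℕ :=
  {e : Sym2 V | e ∈ F ∧ ∃ u ∈ e,
    ((fromEdgeSet (F : Set (Sym2 V))).neighborSet u).ncard = 1}.ncard

/-- The Tutte-like polynomial `f(T;t,z) = Σ_F t^{|F|}·(z+1)^{|F|−L(F)}`, the sum running
over all subtrees `F` of `T` (connected edge subsets, including `∅`), viewed as an
element of `ℤ[z][t]` (outer variable `t`, inner variable `z`). -/
noncomputable def tutteLike {V : Type*} [Fintype V] (G : SimpleGraph V) :
    Polynomial (Polynomial ℤ) :=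
  letI := Classical.decEq V
  letI : DecidableRel G.Adj := Classical.decRel _
  letI := Classical.decPred (IsSubtree G)
  ∑ F ∈ G.edgeFinset.powerset.filter (IsSubtree G),
    Polynomial.C ((Polynomial.X + 1) ^ (F.card - leafCount F)) * Polynomial.X ^ F.card

/-- `betaCount G`: the number of leaf edges of `G` whose non-leaf endpoint has degree
at least 3. -/
noncomputable def betaCount {V : Type*} (G : SimpleGraph V) : ℕ :=
  {e : Sym2 V | e ∈ G.edgeSet ∧ ∃ a b : V, e = s(a, b) ∧
    (G.neighborSet a).ncard = 1 ∧ 3 ≤ (G.neighborSet b).ncard}.ncard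

/-- `internalCount G`: the number of internal (non-leaf) edges of `G`. -/
noncomputable def internalCount {V : Type*} (G : SimpleGraph V) : ℕ :=
  {e : Sym2 V | e ∈ G.edgeSet ∧ ∀ a ∈ e, (G.neighborSet a).ncard ≠ 1}.ncard


section AuxStmt12

open SimpleGraph Polynomial

set_option linter.unusedSectionVars false

variable {V : Type*} [Fintype V]

/-- The set of leaf edges of a graph. -/
def leafSetG (G : SimpleGraph V) : Set (Sym2 V) :=
  {e | e ∈ G.edgeSet ∧ ∃ u ∈ e, (G.neighborSet u).ncard = 1}

lemma closure_eq_univ {G : SimpleGraph V} (hc : G.Connected) {S : Set V}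
    (hS : ∀ x ∈ S, ∀ y, G.Adj x y → y ∈ S) {x₀ : V} (hx : x₀ ∈ S) (v : V) : v ∈ S := by
  suffices h : ∀ {x v : V}, G.Walk x v → x ∈ S → v ∈ S from h (hc.preconnected x₀ v).some hx
  intro x v p
  induction p with
  | nil => exact id
  | cons h q ih => exact fun hx => ih (hS _ hx _ h)

lemma card_le_ncard_of_closed {G : SimpleGraph V} (hc : G.Connected) {S : Set V}
    (hS : ∀ x ∈ S, ∀ y, G.Adj x y → y ∈ S) {x₀ : V} (hx : x₀ ∈ S) :
    Fintype.card V ≤ S.ncard := by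
  have h : (Set.univ : Set V) ⊆ S := fun v _ => closure_eq_univ hc hS hx v
  calc Fintype.card V = (Set.univ : Set V).ncard := by
        rw [Set.ncard_univ, Nat.card_eq_fintype_card]
    _ ≤ S.ncard := Set.ncard_le_ncard h (Set.toFinite S)

lemma edge_eq_of_mem {G : SimpleGraph V} {e : Sym2 V} {a b : V}
    (he : e ∈ G.edgeSet) (ha : a ∈ e) (hN : G.neighborSet a = {b}) : e = s(a, b) := by
  obtain ⟨y, rfl⟩ := Sym2.mem_iff_exists.mp ha
  have : y ∈ G.neighborSet a := he
  rw [hN, Set.mem_singleton_iff] at this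
  rw [this]

lemma neighborSet_eq_singleton {G : SimpleGraph V} {a b : V}
    (h1 : (G.neighborSet a).ncard = 1) (hab : G.Adj a b) : G.neighborSet a = {b} := by
  obtain ⟨c, hc⟩ := Set.ncard_eq_one.mp h1
  have : b ∈ G.neighborSet a := hab
  rw [hc, Set.mem_singleton_iff] at this
  rw [hc, this]

lemma nbr_del_of_ne {G : SimpleGraph V} {a b : V} {u : V} (hua : u ≠ a) (hub : u ≠ b) :
    (G.deleteEdges {s(a, b)}).neighborSet u = G.neighborSet u := by
  ext y
  simp only [mem_neighborSet, deleteEdges_adj, Set.mem_singleton_iff, and_iff_left_iff_imp]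
  intro _ h
  rw [Sym2.eq_iff] at h
  tauto

lemma nbr_del_left (G : SimpleGraph V) (a b : V) (hab : a ≠ b) :
    (G.deleteEdges {s(a, b)}).neighborSet a = G.neighborSet a \ {b} := by
  ext y
  simp only [mem_neighborSet, deleteEdges_adj, Set.mem_singleton_iff, Set.mem_diff]
  constructor
  · rintro ⟨h1, h2⟩
    refine ⟨h1, fun hy => h2 ?_⟩
    rw [hy]
  · rintro ⟨h1, h2⟩
    refine ⟨h1, fun hy => h2 ?_⟩
    rw [Sym2.eq_iff] at hy
    tauto

lemma nbr_del_right (G : SimpleGraph V) (a b : V) (hab : a ≠ b) :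
    (G.deleteEdges {s(a, b)}).neighborSet b = G.neighborSet b \ {a} := by
  rw [show s(a,b) = s(b,a) from Sym2.eq_swap]
  exact nbr_del_left G b a hab.symm

lemma not_mem_support_del {G : SimpleGraph V} {a b : V}
    (hN : G.neighborSet a = {b}) : a ∉ (G.deleteEdges {s(a, b)}).support := by
  rintro ⟨y, hy⟩
  replace hy : (G.deleteEdges {s(a, b)}).Adj a y := hy
  rw [deleteEdges_adj, Set.mem_singleton_iff] at hy
  have : y ∈ G.neighborSet a := hy.1
  rw [hN, Set.mem_singleton_iff] at this
  exact hy.2 (by rw [this])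

lemma reachable_del_leaf {G : SimpleGraph V} (hc : G.Connected) {a b : V}
    (hN : G.neighborSet a = {b}) {u v : V}
    (hu : u ∈ (G.deleteEdges {s(a, b)}).support) (hv : v ∈ (G.deleteEdges {s(a, b)}).support) :
    (G.deleteEdges {s(a, b)}).Reachable u v := by
  set H := G.deleteEdges {s(a, b)} with hH
  have hT : ∀ x : V, x = a ∨ H.Reachable b x := by
    intro x
    refine closure_eq_univ hc (S := {x | x = a ∨ H.Reachable b x}) ?_ (Or.inl rfl) x
    rintro p hp q hpq
    by_cases hpa : p = a
    · subst hpa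
      have : q ∈ G.neighborSet p := hpq
      rw [hN, Set.mem_singleton_iff] at this
      subst this
      exact Or.inr (Reachable.refl _)
    · rcases hp with hp | hp
      · exact absurd hp hpa
      · by_cases hqa : q = a
        · exact Or.inl hqa
        · refine Or.inr (hp.trans (Adj.reachable ?_))
          rw [hH, deleteEdges_adj, Set.mem_singleton_iff]
          refine ⟨hpq, fun h => ?_⟩
          rw [Sym2.eq_iff] at h
          tauto
  have hua : u ≠ a := by rintro rfl; exact not_mem_support_del hN hu
  have hva : v ≠ a := by rintro rfl; exact not_mem_support_del hN hv
  have h1 := (hT u).resolve_left hua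
  have h2 := (hT v).resolve_left hva
  exact h1.symm.trans h2

lemma not_both_deg_one {G : SimpleGraph V} (hc : G.Connected) (hV : 4 ≤ Fintype.card V)
    {a b : V} (hab : G.Adj a b) (h1 : (G.neighborSet a).ncard = 1) :
    (G.neighborSet b).ncard ≠ 1 := by
  intro h2
  have hNa := neighborSet_eq_singleton h1 hab
  have hNb := neighborSet_eq_singleton h2 hab.symm
  have hle := card_le_ncard_of_closed hc (S := {a, b}) ?_ (Set.mem_insert a {b})
  · have : ({a, b} : Set V).ncard ≤ 2 :=
      le_trans (Set.ncard_insert_le a {b}) (by simp)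
    omega
  · rintro x (rfl | rfl) y hy
    · have : y ∈ G.neighborSet x := hy
      rw [hNa, Set.mem_singleton_iff] at this
      exact Or.inr this
    · have : y ∈ G.neighborSet x := hy
      rw [hNb, Set.mem_singleton_iff] at this
      exact Or.inl this

lemma leafSetG_del_beta {G : SimpleGraph V} {a b : V} (hab : G.Adj a b)
    (h1 : (G.neighborSet a).ncard = 1) (h3 : 3 ≤ (G.neighborSet b).ncard) :
    leafSetG (G.deleteEdges {s(a, b)}) = leafSetG G \ {s(a, b)} := by
  have hNa := neighborSet_eq_singleton h1 hab
  have hne : a ≠ b := hab.ne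
  have hnbB : (G.deleteEdges {s(a, b)}).neighborSet b = G.neighborSet b \ {a} :=
    nbr_del_right G a b hne
  have hcardB : 2 ≤ ((G.deleteEdges {s(a, b)}).neighborSet b).ncard := by
    have hd : (G.neighborSet b \ {a}).ncard = (G.neighborSet b).ncard - 1 :=
      Set.ncard_diff_singleton_of_mem (show a ∈ G.neighborSet b from hab.symm)
    rw [hnbB]
    omega
  have hnbA : (G.deleteEdges {s(a, b)}).neighborSet a = ∅ := by
    rw [nbr_del_left G a b hne, hNa, Set.diff_self]
  ext e'
  simp only [leafSetG, Set.mem_setOf_eq, edgeSet_deleteEdges, Set.mem_diff,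
    Set.mem_singleton_iff]
  constructor
  · rintro ⟨⟨heG, hee⟩, u, hu, hdeg⟩
    have hua : u ≠ a := by rintro rfl; rw [hnbA] at hdeg; simp at hdeg
    have hub : u ≠ b := by rintro rfl; omega
    rw [nbr_del_of_ne hua hub] at hdeg
    exact ⟨⟨heG, u, hu, hdeg⟩, hee⟩
  · rintro ⟨⟨heG, u, hu, hdeg⟩, hee⟩
    have hua : u ≠ a := by
      rintro rfl
      exact hee (edge_eq_of_mem heG hu hNa)
    have hub : u ≠ b := by rintro rfl; omega
    refine ⟨⟨heG, hee⟩, u, hu, ?_⟩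
    rwa [nbr_del_of_ne hua hub]

lemma alpha_extract {G : SimpleGraph V} (hc : G.Connected) (hV : 4 ≤ Fintype.card V)
    {a b : V} (hab : G.Adj a b) (h1 : (G.neighborSet a).ncard = 1)
    (h2 : (G.neighborSet b).ncard = 2) :
    ∃ c : V, G.Adj b c ∧ c ≠ a ∧ G.neighborSet b = {a, c} ∧
      2 ≤ (G.neighborSet c).ncard ∧
      (G.deleteEdges {s(a, b)}).neighborSet b = {c} := by
  have hNa := neighborSet_eq_singleton h1 hab
  have hne : a ≠ b := hab.ne
  obtain ⟨x, y, hxy, hset0⟩ := Set.ncard_eq_two.mp h2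
  have haN : a ∈ G.neighborSet b := hab.symm
  rw [hset0] at haN
  obtain ⟨c, hca, hset⟩ : ∃ c, c ≠ a ∧ G.neighborSet b = {a, c} := by
    rcases haN with rfl | rfl
    · exact ⟨y, Ne.symm hxy, hset0⟩
    · exact ⟨x, hxy, hset0.trans (Set.pair_comm x a)⟩
  have hbc : G.Adj b c := by
    have : c ∈ G.neighborSet b := by rw [hset]; exact Or.inr rfl
    exact this
  refine ⟨c, hbc, hca, hset, ?_, ?_⟩
  · have hbmem : b ∈ G.neighborSet c := hbc.symm
    have hpos : 0 < (G.neighborSet c).ncard :=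
      (Set.ncard_pos (Set.toFinite _)).mpr ⟨b, hbmem⟩
    rcases Nat.lt_or_ge 1 ((G.neighborSet c).ncard) with h | h
    · omega
    · exfalso
      have hNc : G.neighborSet c = {b} := neighborSet_eq_singleton (by omega) hbc.symm
      have hle := card_le_ncard_of_closed hc (S := {a, b, c}) ?_
        (Set.mem_insert a {b, c})
      · have h3 : ({a, b, c} : Set V).ncard ≤ 3 := by
          refine le_trans (Set.ncard_insert_le _ _) ?_
          have : ({b, c} : Set V).ncard ≤ 2 :=
            le_trans (Set.ncard_insert_le _ _) (by simp)
          omega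
        omega
      · rintro x (rfl | rfl | rfl) z hz
        · have : z ∈ G.neighborSet x := hz
          rw [hNa, Set.mem_singleton_iff] at this
          exact Or.inr (Or.inl this)
        · have : z ∈ G.neighborSet x := hz
          rw [hset] at this
          rcases this with h | h
          · exact Or.inl h
          · exact Or.inr (Or.inr h)
        · have : z ∈ G.neighborSet x := hz
          rw [hNc, Set.mem_singleton_iff] at this
          exact Or.inr (Or.inl this)
  · rw [nbr_del_right G a b hne, hset]
    ext z
    simp only [Set.mem_diff, Set.mem_insert_iff, Set.mem_singleton_iff]
    constructor
    · rintro ⟨h | h, hz⟩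
      · exact absurd h hz
      · exact h
    · rintro rfl
      exact ⟨Or.inr rfl, hca⟩

lemma leafSetG_del_alpha {G : SimpleGraph V} (hc : G.Connected) (hV : 4 ≤ Fintype.card V)
    {a b : V} (hab : G.Adj a b) (h1 : (G.neighborSet a).ncard = 1)
    (h2 : (G.neighborSet b).ncard = 2) :
    (leafSetG (G.deleteEdges {s(a, b)})).ncard = (leafSetG G).ncard := by
  obtain ⟨c, hbc, hca, hset, hc2, hHb⟩ := alpha_extract hc hV hab h1 h2
  have hNa := neighborSet_eq_singleton h1 hab
  have hne : a ≠ b := hab.ne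
  have hcb : c ≠ b := hbc.ne'
  have hnbA : (G.deleteEdges {s(a, b)}).neighborSet a = ∅ := by
    rw [nbr_del_left G a b hne, hNa, Set.diff_self]
  have hbc_ne : s(b, c) ≠ s(a, b) := by
    intro h
    rw [Sym2.eq_iff] at h
    rcases h with ⟨rfl, rfl⟩ | ⟨-, rfl⟩
    · exact hne rfl
    · exact hca rfl
  have hkey : leafSetG (G.deleteEdges {s(a, b)}) =
      insert s(b, c) (leafSetG G \ {s(a, b)}) := by
    ext e'
    simp only [leafSetG, Set.mem_setOf_eq, edgeSet_deleteEdges, Set.mem_diff,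
      Set.mem_singleton_iff, Set.mem_insert_iff]
    constructor
    · rintro ⟨⟨heG, hee⟩, u, hu, hdeg⟩
      have hua : u ≠ a := by rintro rfl; rw [hnbA] at hdeg; simp at hdeg
      by_cases hub : u = b
      · subst u
        left
        have he' : e' ∈ (G.deleteEdges {s(a, b)}).edgeSet := by
          rw [edgeSet_deleteEdges]; exact ⟨heG, hee⟩
        exact edge_eq_of_mem he' hu hHb
      · right
        have huc : u ≠ c := by
          rintro rfl
          rw [nbr_del_of_ne hua hub] at hdeg
          omega
        rw [nbr_del_of_ne hua hub] at hdeg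
        exact ⟨⟨heG, u, hu, hdeg⟩, hee⟩
    · rintro (rfl | ⟨⟨heG, u, hu, hdeg⟩, hee⟩)
      · refine ⟨⟨hbc, hbc_ne⟩, b, Sym2.mem_mk_left b c, ?_⟩
        rw [hHb, Set.ncard_singleton]
      · have hua : u ≠ a := by
          rintro rfl
          exact hee (edge_eq_of_mem heG hu hNa)
        have hub : u ≠ b := by rintro rfl; omega
        refine ⟨⟨heG, hee⟩, u, hu, ?_⟩
        rwa [nbr_del_of_ne hua hub]
  have hbc_not : s(b, c) ∉ leafSetG G \ {s(a, b)} := by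
    rintro ⟨⟨-, u, hu, hdeg⟩, -⟩
    rw [Sym2.mem_iff] at hu
    rcases hu with rfl | rfl
    · omega
    · omega
  have he_mem : s(a, b) ∈ leafSetG G :=
    ⟨G.mem_edgeSet.mpr hab, a, Sym2.mem_mk_left a b, h1⟩
  have hLpos : 1 ≤ (leafSetG G).ncard :=
    (Set.ncard_pos (Set.toFinite _)).mpr ⟨_, he_mem⟩
  rw [hkey, Set.ncard_insert_of_notMem hbc_not,
    Set.ncard_diff_singleton_of_mem he_mem]
  omega

lemma fromEdgeSet_erase [DecidableEq V] (G : SimpleGraph V) [Fintype G.edgeSet] (e : Sym2 V) :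
    fromEdgeSet ↑(G.edgeFinset.erase e) = G.deleteEdges {e} := by
  rw [Finset.coe_erase, coe_edgeFinset, ← edgeSet_deleteEdges, fromEdgeSet_edgeSet]

lemma coe_erase_subset [DecidableEq V] (G : SimpleGraph V) [Fintype G.edgeSet] (e : Sym2 V) :
    ↑(G.edgeFinset.erase e) ⊆ G.edgeSet := by
  rw [Finset.coe_erase, coe_edgeFinset]
  exact Set.diff_subset

lemma isSubtree_erase_of_leaf [DecidableEq V] {G : SimpleGraph V} [Fintype G.edgeSet]
    (hc : G.Connected) {a b : V} (hab : G.Adj a b) (h1 : (G.neighborSet a).ncard = 1) :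
    IsSubtree G (G.edgeFinset.erase s(a, b)) := by
  refine ⟨coe_erase_subset G _, ?_⟩
  rw [fromEdgeSet_erase]
  exact fun u v hu hv => reachable_del_leaf hc (neighborSet_eq_singleton h1 hab) hu hv

lemma not_isSubtree_erase_internal [DecidableEq V] {G : SimpleGraph V} [Fintype G.edgeSet]
    (hT : G.IsTree) {a b : V} (hab : G.Adj a b)
    (h1 : (G.neighborSet a).ncard ≠ 1) (h2 : (G.neighborSet b).ncard ≠ 1) :
    ¬ IsSubtree G (G.edgeFinset.erase s(a, b)) := by
  rintro ⟨-, hreach⟩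
  rw [fromEdgeSet_erase] at hreach
  have hbridge : ¬ (G.deleteEdges {s(a, b)}).Reachable a b :=
    (isBridge_iff.mp ((isAcyclic_iff_forall_edge_isBridge.mp hT.IsAcyclic)
      (G.mem_edgeSet.mpr hab)))
  have hsup : ∀ (x y : V), G.Adj x y → (G.neighborSet x).ncard ≠ 1 → s(x, y) = s(a, b) →
      x ∈ (G.deleteEdges {s(a, b)}).support := by
    intro x y hxy hx1 hxe
    have hy : y ∈ G.neighborSet x := hxy
    have hpos : 0 < (G.neighborSet x).ncard := (Set.ncard_pos (Set.toFinite _)).mpr ⟨y, hy⟩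
    have h2' : 1 < (G.neighborSet x).ncard := by omega
    obtain ⟨z, hz, hzy⟩ := Set.exists_ne_of_one_lt_ncard h2' y
    refine ⟨z, ?_⟩
    show (G.deleteEdges {s(a, b)}).Adj x z
    rw [deleteEdges_adj, Set.mem_singleton_iff]
    refine ⟨hz, fun h => hzy ?_⟩
    exact Sym2.congr_right.mp (h.trans hxe.symm)
  exact hbridge (hreach a b (hsup a b hab h1 rfl) (hsup b a hab.symm h2 Sym2.eq_swap))

lemma leafCount_erase [DecidableEq V] (G : SimpleGraph V) [Fintype G.edgeSet] (e : Sym2 V) :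
    leafCount (G.edgeFinset.erase e) = (leafSetG (G.deleteEdges {e})).ncard := by
  unfold leafCount leafSetG
  rw [fromEdgeSet_erase]
  congr 1
  ext e'
  simp only [Set.mem_setOf_eq, Finset.mem_coe, Finset.mem_erase, mem_edgeFinset,
    edgeSet_deleteEdges, Set.mem_diff, Set.mem_singleton_iff]
  tauto

lemma leaf_of_subtree_erase [DecidableEq V] {G : SimpleGraph V} [Fintype G.edgeSet]
    (hT : G.IsTree) {e : Sym2 V} (heE : e ∈ G.edgeSet)
    (hs : IsSubtree G (G.edgeFinset.erase e)) : e ∈ leafSetG G := by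
  induction e using Sym2.ind with
  | _ a b =>
    have hab : G.Adj a b := heE
    by_contra hleaf
    have hint : ∀ u ∈ s(a, b), (G.neighborSet u).ncard ≠ 1 := by
      intro u hu h1
      exact hleaf ⟨heE, u, hu, h1⟩
    exact not_isSubtree_erase_internal hT hab (hint a (Sym2.mem_mk_left a b))
      (hint b (Sym2.mem_mk_right a b)) hs

lemma internal_eq_diff (G : SimpleGraph V) :
    {e : Sym2 V | e ∈ G.edgeSet ∧ ∀ a ∈ e, (G.neighborSet a).ncard ≠ 1} =
      G.edgeSet \ leafSetG G := by
  ext e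
  constructor
  · rintro ⟨he, h⟩
    exact ⟨he, fun hmem => by obtain ⟨-, u, hu, h1⟩ := hmem; exact h u hu h1⟩
  · rintro ⟨he, h⟩
    exact ⟨he, fun u hu h1 => h ⟨he, u, hu, h1⟩⟩

lemma alpha_union_beta {G : SimpleGraph V} (hc : G.Connected) (hV : 4 ≤ Fintype.card V) :
    {e : Sym2 V | e ∈ G.edgeSet ∧ ∃ a b : V, e = s(a, b) ∧
      (G.neighborSet a).ncard = 1 ∧ (G.neighborSet b).ncard = 2} ∪
    {e : Sym2 V | e ∈ G.edgeSet ∧ ∃ a b : V, e = s(a, b) ∧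
      (G.neighborSet a).ncard = 1 ∧ 3 ≤ (G.neighborSet b).ncard} = leafSetG G := by
  ext e
  constructor
  · rintro (⟨he, a, b, rfl, h1, -⟩ | ⟨he, a, b, rfl, h1, -⟩) <;>
      exact ⟨he, a, Sym2.mem_mk_left a b, h1⟩
  · rintro ⟨he, u, hu, h1⟩
    obtain ⟨w, rfl⟩ := Sym2.mem_iff_exists.mp hu
    have hadj : G.Adj u w := he
    have hw1 : (G.neighborSet w).ncard ≠ 1 := not_both_deg_one hc hV hadj h1
    have hwpos : 0 < (G.neighborSet w).ncard :=
      (Set.ncard_pos (Set.toFinite _)).mpr ⟨u, hadj.symm⟩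
    by_cases h2 : (G.neighborSet w).ncard = 2
    · exact Or.inl ⟨he, u, w, rfl, h1, h2⟩
    · exact Or.inr ⟨he, u, w, rfl, h1, by omega⟩

lemma alpha_disjoint_beta (G : SimpleGraph V) :
    Disjoint
      {e : Sym2 V | e ∈ G.edgeSet ∧ ∃ a b : V, e = s(a, b) ∧
        (G.neighborSet a).ncard = 1 ∧ (G.neighborSet b).ncard = 2}
      {e : Sym2 V | e ∈ G.edgeSet ∧ ∃ a b : V, e = s(a, b) ∧
        (G.neighborSet a).ncard = 1 ∧ 3 ≤ (G.neighborSet b).ncard} := by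
  rw [Set.disjoint_left]
  rintro e ⟨-, a, b, rfl, h1, h2⟩ ⟨-, a', b', heq, h1', h3'⟩
  rw [Sym2.eq_iff] at heq
  rcases heq with ⟨rfl, rfl⟩ | ⟨rfl, rfl⟩
  · omega
  · omega

end AuxStmt12

/-- For a finite tree `T = (V,E)` with `|V| ≥ 4` and `|I| ≥ 1` internal
edges, the coefficient of `t^{|E|−1}` in the Tutte-like polynomial `f(T;t,z)` equals
`α·(1+z)^{|I|−1} + β·(1+z)^{|I|}`, where `α` is the number of leaf edges whose non-leaf
endpoint has degree exactly 2 and `β` the number of leaf edges whose non-leaf endpoint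
has degree at least 3. -/
theorem stmt_12 {V : Type*} [Fintype V] (hcard : 4 ≤ Fintype.card V)
    (G : SimpleGraph V) (hT : G.IsTree) (hI : 1 ≤ internalCount G) :
    (tutteLike G).coeff (G.edgeSet.ncard - 1) =
      (alphaCount G : Polynomial ℤ) * (Polynomial.X + 1) ^ (internalCount G - 1) +
        (betaCount G : Polynomial ℤ) * (Polynomial.X + 1) ^ (internalCount G) := by
  letI := Classical.decEq V
  letI : DecidableRel G.Adj := Classical.decRel _
  letI := Classical.decPred (IsSubtree G)
  have hc := hT.isConnected
  set L := (leafSetG G).ncard with hL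
  have hsub_leaf : leafSetG G ⊆ G.edgeSet := fun e he => he.1
  have hedge_card : G.edgeSet.ncard = G.edgeFinset.card := by
    rw [Set.ncard_eq_toFinset_card']
    rfl
  set m := G.edgeFinset.card with hm
  have hLm : L ≤ m := by
    rw [← hedge_card]
    exact Set.ncard_le_ncard hsub_leaf (Set.toFinite _)
  have hIL : internalCount G = m - L := by
    unfold internalCount
    rw [internal_eq_diff, Set.ncard_diff hsub_leaf, hedge_card]
  have hm1 : L + 1 ≤ m := by omega
  have hαβ : alphaCount G + betaCount G = L := by
    unfold alphaCount betaCount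
    rw [← Set.ncard_union_eq (alpha_disjoint_beta G) (Set.toFinite _) (Set.toFinite _),
      alpha_union_beta hc hcard]
  set n := m - 1 with hn
  have hgoal_n : G.edgeSet.ncard - 1 = n := by rw [hedge_card]
  rw [hgoal_n]
  unfold tutteLike
  rw [Polynomial.finset_sum_coeff]
  have hcoeff : ∀ F ∈ G.edgeFinset.powerset.filter (IsSubtree G),
      (Polynomial.C ((Polynomial.X + 1 : Polynomial ℤ) ^ (F.card - leafCount F)) *
        Polynomial.X ^ F.card).coeff n
        = if n = F.card then (Polynomial.X + 1 : Polynomial ℤ) ^ (F.card - leafCount F)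
          else 0 := by
    intro F _
    rw [Polynomial.coeff_C_mul, Polynomial.coeff_X_pow, mul_ite, mul_one, mul_zero]
  rw [Finset.sum_congr rfl hcoeff, ← Finset.sum_filter]
  have hfinL : (leafSetG G).Finite := Set.toFinite _
  have himg : (G.edgeFinset.powerset.filter (IsSubtree G)).filter (fun F => n = F.card)
      = hfinL.toFinset.image (fun e => G.edgeFinset.erase e) := by
    ext F
    simp only [Finset.mem_filter, Finset.mem_powerset, Finset.mem_image,
      Set.Finite.mem_toFinset]
    constructor
    · rintro ⟨⟨hFsub, hFtree⟩, hFcard⟩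
      have hFle : F.card ≤ m := Finset.card_le_card hFsub
      have hcard2 : (G.edgeFinset \ F).card = 1 := by
        rw [Finset.card_sdiff_of_subset hFsub]
        omega
      obtain ⟨e, he⟩ := Finset.card_eq_one.mp hcard2
      have hemem : e ∈ G.edgeFinset \ F := by rw [he]; exact Finset.mem_singleton_self e
      have heE : e ∈ G.edgeFinset := (Finset.mem_sdiff.mp hemem).1
      have heF : e ∉ F := (Finset.mem_sdiff.mp hemem).2
      have hFe : F = G.edgeFinset.erase e := by
        ext x
        rw [Finset.mem_erase]
        constructor
        · intro hx
          exact ⟨fun h => heF (h ▸ hx), hFsub hx⟩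
        · rintro ⟨hxe, hxE⟩
          by_contra hxF
          have hxs : x ∈ G.edgeFinset \ F := Finset.mem_sdiff.mpr ⟨hxE, hxF⟩
          rw [he, Finset.mem_singleton] at hxs
          exact hxe hxs
      exact ⟨e, leaf_of_subtree_erase hT (mem_edgeFinset.mp heE) (hFe ▸ hFtree), hFe.symm⟩
    · rintro ⟨e, he, rfl⟩
      obtain ⟨heE, u, hu, h1⟩ := he
      obtain ⟨w, rfl⟩ := Sym2.mem_iff_exists.mp hu
      have hadj : G.Adj u w := heE
      refine ⟨⟨Finset.erase_subset _ _, isSubtree_erase_of_leaf hc hadj h1⟩, ?_⟩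
      rw [Finset.card_erase_of_mem (mem_edgeFinset.mpr heE)]
  rw [himg]
  have hinj : ∀ e₁ ∈ hfinL.toFinset, ∀ e₂ ∈ hfinL.toFinset,
      G.edgeFinset.erase e₁ = G.edgeFinset.erase e₂ → e₁ = e₂ := by
    intro e₁ h1 e₂ h2 h
    by_contra hne
    have he1 : e₁ ∈ G.edgeFinset.erase e₂ :=
      Finset.mem_erase.mpr ⟨hne, mem_edgeFinset.mpr ((hfinL.mem_toFinset.mp h1).1)⟩
    rw [← h] at he1
    exact (Finset.notMem_erase e₁ _) he1
  rw [Finset.sum_image hinj]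
  -- split the leaf set into alpha and beta parts
  have hAfin : ({e : Sym2 V | e ∈ G.edgeSet ∧ ∃ a b : V, e = s(a, b) ∧
      (G.neighborSet a).ncard = 1 ∧ (G.neighborSet b).ncard = 2}).Finite := Set.toFinite _
  have hBfin : ({e : Sym2 V | e ∈ G.edgeSet ∧ ∃ a b : V, e = s(a, b) ∧
      (G.neighborSet a).ncard = 1 ∧ 3 ≤ (G.neighborSet b).ncard}).Finite := Set.toFinite _
  have hsplit : hfinL.toFinset = hAfin.toFinset ∪ hBfin.toFinset := by
    ext e
    simp only [Set.Finite.mem_toFinset, Finset.mem_union]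
    rw [← Set.mem_union, alpha_union_beta hc hcard]
  have hdisj : Disjoint hAfin.toFinset hBfin.toFinset := by
    rw [Set.Finite.disjoint_toFinset]
    exact alpha_disjoint_beta G
  rw [hsplit, Finset.sum_union hdisj]
  have hA_val : ∀ e ∈ hAfin.toFinset,
      ((Polynomial.X + 1 : Polynomial ℤ)) ^
        ((G.edgeFinset.erase e).card - leafCount (G.edgeFinset.erase e)) =
      (Polynomial.X + 1) ^ (internalCount G - 1) := by
    intro e he
    rw [hAfin.mem_toFinset] at he
    obtain ⟨heE, a, b, rfl, h1, h2⟩ := he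
    have hadj : G.Adj a b := heE
    rw [Finset.card_erase_of_mem (mem_edgeFinset.mpr heE), leafCount_erase,
      leafSetG_del_alpha hc hcard hadj h1 h2]
    congr 1
    omega
  have hB_val : ∀ e ∈ hBfin.toFinset,
      ((Polynomial.X + 1 : Polynomial ℤ)) ^
        ((G.edgeFinset.erase e).card - leafCount (G.edgeFinset.erase e)) =
      (Polynomial.X + 1) ^ (internalCount G) := by
    intro e he
    rw [hBfin.mem_toFinset] at he
    obtain ⟨heE, a, b, rfl, h1, h3⟩ := he
    have hadj : G.Adj a b := heE
    have he_mem : s(a, b) ∈ leafSetG G := ⟨heE, a, Sym2.mem_mk_left a b, h1⟩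
    have hL1 : 1 ≤ L := by
      rw [hL]
      exact (Set.ncard_pos (Set.toFinite _)).mpr ⟨_, he_mem⟩
    rw [Finset.card_erase_of_mem (mem_edgeFinset.mpr heE), leafCount_erase,
      leafSetG_del_beta hadj h1 h3,
      Set.ncard_diff_singleton_of_mem he_mem]
    congr 1
    omega
  rw [Finset.sum_congr rfl hA_val, Finset.sum_congr rfl hB_val, Finset.sum_const,
    Finset.sum_const, nsmul_eq_mul, nsmul_eq_mul]
  have hAcard : hAfin.toFinset.card = alphaCount G :=
    (Set.ncard_eq_toFinset_card _ hAfin).symm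
  have hBcard : hBfin.toFinset.card = betaCount G :=
    (Set.ncard_eq_toFinset_card _ hBfin).symm
  rw [hAcard, hBcard]
end
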